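/- arXiv:2404.01724 — 3 statements merged into one kernel-verified Lean document; each statement's English description precedes it below -/
import Mathlib

section
/- There exists a constant C > 0 such that for every function f in W^{1,2}(ℝ⁴) ∩ L^1(ℝ⁴) with f ≥ 0 almost everywhere and every N ≥ 1, one has ‖f‖_{3/2}^{3/2} ≤ (C / sqrt(log(1+N²))) · ‖(1+f)·log(1+f)‖_1^{1/2} · ∫_{ℝ⁴} |∇f|²/(1+f) dx + C · N^{1/2} · ‖f‖_1. -/
set_option maxHeartbeats 2000000

open MeasureTheory Filter Set Function Topology ENNReal Metric NNReal

lemma ofReal_norm_eq_coe_nnnorm {E : Type*} [SeminormedAddGroup E] (a : E) :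
    ENNReal.ofReal ‖a‖ = (‖a‖₊ : ℝ≥0∞) := ENNReal.ofReal_eq_coe_nnreal _

protected lemma Measurable.ennnorm {α β : Type*} [MeasurableSpace α] [NormedAddCommGroup α]
    [OpensMeasurableSpace α] [MeasurableSpace β] {f : β → α} (hf : Measurable f) :
    Measurable (fun a => (‖f a‖₊ : ℝ≥0∞)) := hf.nnnorm.coe_nnreal_ennreal

lemma lemA {u : (Fin 4 → ℝ) → ℝ} (hu : Differentiable ℝ u) (h2u : HasCompactSupport u) :
    ∫⁻ x, (‖u x‖₊ : ℝ≥0∞) ^ ((4:ℝ)/3) ≤ (∫⁻ x, (‖fderiv ℝ u x‖₊ : ℝ≥0∞)) ^ ((4:ℝ)/3) := by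
  classical
  have key : ∀ (x : Fin 4 → ℝ) (i : Fin 4),
      (‖u x‖₊ : ℝ≥0∞) ≤ ∫⁻ t, (‖fderiv ℝ u (Function.update x i t)‖₊ : ℝ≥0∞) := by
    intro x i
    by_cases hfin : (∫⁻ t, (‖fderiv ℝ u (Function.update x i t)‖₊ : ℝ≥0∞)) = ∞
    · rw [hfin]; exact le_top
    set h : ℝ → ℝ := u ∘ Function.update x i with hh
    set d : ℝ → ℝ := fun t => fderiv ℝ u (Function.update x i t) (Pi.single i 1) with hd'
    have hd : ∀ t, HasDerivAt h (d t) t := by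
      intro t
      have h1 : HasFDerivAt u (fderiv ℝ u (Function.update x i t)) (Function.update x i t) :=
        (hu _).hasFDerivAt
      have h2 : HasDerivAt (Function.update x i) (Pi.single i 1) t := hasDerivAt_update x i t
      exact h1.comp_hasDerivAt t h2
    have hdmeas : Measurable d := by
      have : d = deriv h := by
        funext t; exact ((hd t).deriv).symm
      rw [this]; exact measurable_deriv h
    have hdle : ∀ t, (‖d t‖₊ : ℝ≥0∞) ≤ (‖fderiv ℝ u (Function.update x i t)‖₊ : ℝ≥0∞) := by
      intro t
      have := (fderiv ℝ u (Function.update x i t)).le_opNorm (Pi.single i 1)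
      have h1 : ‖(Pi.single i 1 : Fin 4 → ℝ)‖ ≤ 1 := by
        rw [Pi.norm_single]; simp
      have : ‖d t‖ ≤ ‖fderiv ℝ u (Function.update x i t)‖ := by
        calc ‖d t‖ ≤ ‖fderiv ℝ u (Function.update x i t)‖ * ‖(Pi.single i 1 : Fin 4 → ℝ)‖ := this
        _ ≤ ‖fderiv ℝ u (Function.update x i t)‖ * 1 := by
              exact mul_le_mul_of_nonneg_left h1 (norm_nonneg _)
        _ = _ := mul_one _
      exact_mod_cast ENNReal.coe_le_coe.2 (by exact_mod_cast this)
    have hdint : Integrable d := by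
      refine ⟨hdmeas.aestronglyMeasurable, ?_⟩
      have : HasFiniteIntegral d volume := by
        simp only [HasFiniteIntegral]
        exact lt_of_le_of_lt (lintegral_mono fun t => hdle t) (lt_top_iff_ne_top.2 hfin)
      exact this
    have hcomp : HasCompactSupport h :=
      h2u.comp_isClosedEmbedding (isClosedEmbedding_update x i)
    have htend : Tendsto h atBot (𝓝 0) := by
      rw [hasCompactSupport_iff_eventuallyEq, Filter.coclosedCompact_eq_cocompact] at hcomp
      exact hcomp.filter_mono _root_.atBot_le_cocompact |>.tendsto
    have hftc : ∫ t in Iic (x i), d t = h (x i) - 0 :=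
      integral_Iic_of_hasDerivAt_of_tendsto' (fun t _ => hd t) hdint.integrableOn htend
    have hux : h (x i) = u x := by simp [hh, Function.update_eq_self]
    calc (‖u x‖₊ : ℝ≥0∞) = ‖∫ t in Iic (x i), d t‖₊ := by rw [hftc, sub_zero, hux]
      _ ≤ ∫⁻ t in Iic (x i), ‖d t‖₊ := enorm_integral_le_lintegral_enorm _
      _ ≤ ∫⁻ t, ‖d t‖₊ := lintegral_mono' Measure.restrict_le_self le_rfl
      _ ≤ _ := lintegral_mono fun t => hdle t
  have hp : ((Fintype.card (Fin 4) : ℝ)).HolderConjugate ((4:ℝ)/3) := by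
    rw [Real.holderConjugate_iff]; norm_num [Fintype.card_fin]
  have hmeas : Measurable (fun x : Fin 4 → ℝ => (‖fderiv ℝ u x‖₊ : ℝ≥0∞)) :=
    (measurable_fderiv ℝ u).ennnorm
  calc ∫⁻ x, (‖u x‖₊ : ℝ≥0∞) ^ ((4:ℝ)/3)
      = ∫⁻ x, ∏ _i : Fin 4, (‖u x‖₊ : ℝ≥0∞) ^ ((1:ℝ)/3) := by
        congr 1 with x
        rw [Finset.prod_const, ← ENNReal.rpow_natCast ((‖u x‖₊ : ℝ≥0∞) ^ ((1:ℝ)/3)),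
          ← ENNReal.rpow_mul]
        norm_num
    _ ≤ ∫⁻ x, ∏ i : Fin 4, (∫⁻ t, (‖fderiv ℝ u (Function.update x i t)‖₊ : ℝ≥0∞)) ^ ((1:ℝ)/3) := by
        refine lintegral_mono fun x => Finset.prod_le_prod' fun i _ => ?_
        exact ENNReal.rpow_le_rpow (key x i) (by norm_num)
    _ ≤ (∫⁻ x, (‖fderiv ℝ u x‖₊ : ℝ≥0∞)) ^ ((4:ℝ)/3) := by
        have := lintegral_prod_lintegral_pow_le (fun _ : Fin 4 => (volume : Measure ℝ)) hp hmeas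
        rw [volume_pi]
        simpa [Fintype.card_fin, show ((4:ℝ)-1)⁻¹ = (1:ℝ)/3 by norm_num] using this

lemma lemB {u : (Fin 4 → ℝ) → ℝ} (hu : Differentiable ℝ u) (h2u : HasCompactSupport u) :
    ∫⁻ x, (‖u x‖₊ : ℝ≥0∞) ^ (4:ℝ) ≤ 81 * (∫⁻ x, (‖fderiv ℝ u x‖₊ : ℝ≥0∞) ^ (2:ℝ)) ^ (2:ℝ) := by
  classical
  set X := ∫⁻ x, (‖u x‖₊ : ℝ≥0∞) ^ (4:ℝ) with hX
  set Y := ∫⁻ x, (‖fderiv ℝ u x‖₊ : ℝ≥0∞) ^ (2:ℝ) with hY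
  by_cases hX0 : X = 0
  · rw [hX0]; exact zero_le
  have hXfin : X ≠ ∞ := by
    have hcont : Continuous (fun x => u x ^ 4) := (hu.continuous).pow 4
    have hcs : HasCompactSupport (fun x => u x ^ 4) := by
      have : (fun x => u x ^ 4) = (fun y : ℝ => y ^ 4) ∘ u := rfl
      rw [this]; exact h2u.comp_left (by simp)
    have hint : Integrable (fun x => u x ^ 4) := hcont.integrable_of_hasCompactSupport hcs
    have := hint.2
    simp only [HasFiniteIntegral] at this
    have heq : ∀ x, (‖u x ^ 4‖₊ : ℝ≥0∞) = (‖u x‖₊ : ℝ≥0∞) ^ (4:ℝ) := by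
      intro x
      rw [show (4:ℝ) = ((4:ℕ):ℝ) from by norm_num, ENNReal.rpow_natCast, ← ENNReal.coe_pow,
        nnnorm_pow]
    rw [hX]
    simp_rw [← heq]
    exact this.ne
  -- the cubed function
  set v : (Fin 4 → ℝ) → ℝ := fun x => u x ^ 3 with hv
  have hvd : ∀ x, HasFDerivAt v ((3 * u x ^ 2) • fderiv ℝ u x) x := by
    intro x
    have h1 : HasDerivAt (fun y : ℝ => y ^ 3) (3 * u x ^ 2) (u x) := by
      simpa using hasDerivAt_pow 3 (u x)
    exact h1.comp_hasFDerivAt x (hu x).hasFDerivAt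
  have hvdiff : Differentiable ℝ v := fun x => (hvd x).differentiableAt
  have h2v : HasCompactSupport v := by
    have : v = (fun y : ℝ => y ^ 3) ∘ u := rfl
    rw [this]; exact h2u.comp_left (by simp)
  have hA := lemA hvdiff h2v
  -- LHS of A equals X
  have hL : ∫⁻ x, (‖v x‖₊ : ℝ≥0∞) ^ ((4:ℝ)/3) = X := by
    rw [hX]
    congr 1 with x
    have : (‖v x‖₊ : ℝ≥0∞) = (‖u x‖₊ : ℝ≥0∞) ^ (3:ℝ) := by
      rw [show (3:ℝ) = ((3:ℕ):ℝ) from by norm_num, ENNReal.rpow_natCast, ← ENNReal.coe_pow,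
        nnnorm_pow]
    rw [this, ← ENNReal.rpow_mul]
    norm_num
  -- RHS inner integral bound via Cauchy-Schwarz
  have humeas : Measurable (fun x => (‖u x‖₊ : ℝ≥0∞)) := (hu.continuous.measurable).ennnorm
  have hfmeas : Measurable (fun x => (‖fderiv ℝ u x‖₊ : ℝ≥0∞)) := (measurable_fderiv ℝ u).ennnorm
  have hCS : ∫⁻ x, (‖fderiv ℝ v x‖₊ : ℝ≥0∞) ≤ 3 * (X ^ ((1:ℝ)/2) * Y ^ ((1:ℝ)/2)) := by
    have hpt : ∀ x, (‖fderiv ℝ v x‖₊ : ℝ≥0∞)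
        ≤ 3 * ((‖u x‖₊ : ℝ≥0∞) ^ (2:ℝ) * (‖fderiv ℝ u x‖₊ : ℝ≥0∞)) := by
      intro x
      rw [(hvd x).fderiv]
      have h1 : ‖(3 * u x ^ 2) • fderiv ℝ u x‖ = 3 * u x ^ 2 * ‖fderiv ℝ u x‖ := by
        rw [norm_smul]
        congr 1
        rw [Real.norm_eq_abs, abs_of_nonneg (by positivity)]
      have h2 : ((‖(3 * u x ^ 2) • fderiv ℝ u x‖₊ : ℝ≥0∞))
          = ENNReal.ofReal (3 * u x ^ 2 * ‖fderiv ℝ u x‖) := by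
        rw [← ofReal_norm_eq_coe_nnnorm, h1]
      rw [h2, ENNReal.ofReal_mul (by positivity), ENNReal.ofReal_mul (by norm_num)]
      have e1 : ENNReal.ofReal (3:ℝ) = 3 := by norm_num
      have e2 : ENNReal.ofReal (u x ^ 2) = (‖u x‖₊ : ℝ≥0∞) ^ (2:ℝ) := by
        rw [show (2:ℝ) = ((2:ℕ):ℝ) from by norm_num, ENNReal.rpow_natCast, ← ENNReal.coe_pow,
          ← nnnorm_pow, ← ofReal_norm_eq_coe_nnnorm]
        congr 1
        rw [Real.norm_eq_abs, abs_of_nonneg (by positivity)]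
      have e3 : ENNReal.ofReal ‖fderiv ℝ u x‖ = (‖fderiv ℝ u x‖₊ : ℝ≥0∞) :=
        ofReal_norm_eq_coe_nnnorm _
      rw [e1, e2, e3, mul_assoc]
    calc ∫⁻ x, (‖fderiv ℝ v x‖₊ : ℝ≥0∞)
        ≤ ∫⁻ x, 3 * ((‖u x‖₊ : ℝ≥0∞) ^ (2:ℝ) * (‖fderiv ℝ u x‖₊ : ℝ≥0∞)) :=
          lintegral_mono fun x => hpt x
      _ = 3 * ∫⁻ x, (‖u x‖₊ : ℝ≥0∞) ^ (2:ℝ) * (‖fderiv ℝ u x‖₊ : ℝ≥0∞) :=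
          lintegral_const_mul 3 ((humeas.pow_const _).mul hfmeas)
      _ ≤ 3 * ((∫⁻ x, ((‖u x‖₊ : ℝ≥0∞) ^ (2:ℝ)) ^ (2:ℝ)) ^ ((1:ℝ)/2)
            * (∫⁻ x, (‖fderiv ℝ u x‖₊ : ℝ≥0∞) ^ (2:ℝ)) ^ ((1:ℝ)/2)) := by
          gcongr
          exact ENNReal.lintegral_mul_le_Lp_mul_Lq volume ((Real.holderConjugate_iff (p := 2) (q := 2)).2 ⟨one_lt_two, by norm_num⟩)
            (humeas.pow_const _).aemeasurable hfmeas.aemeasurable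
      _ = 3 * (X ^ ((1:ℝ)/2) * Y ^ ((1:ℝ)/2)) := by
          rw [hX, hY]
          congr 3
          exact lintegral_congr fun x => by rw [← ENNReal.rpow_mul]; norm_num
  -- combine
  rw [hL] at hA
  have h3 : X ≤ (3 * (X ^ ((1:ℝ)/2) * Y ^ ((1:ℝ)/2))) ^ ((4:ℝ)/3) :=
    le_trans hA (ENNReal.rpow_le_rpow hCS (by norm_num))
  have hexp : (3 * (X ^ ((1:ℝ)/2) * Y ^ ((1:ℝ)/2))) ^ ((4:ℝ)/3)
      = (3:ℝ≥0∞) ^ ((4:ℝ)/3) * (X ^ ((2:ℝ)/3) * Y ^ ((2:ℝ)/3)) := by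
    rw [ENNReal.mul_rpow_of_nonneg _ _ (by norm_num), ENNReal.mul_rpow_of_nonneg _ _ (by norm_num),
      ← ENNReal.rpow_mul, ← ENNReal.rpow_mul]
    norm_num
  rw [hexp] at h3
  -- cancel X^(2/3)
  have hsplit : X = X ^ ((1:ℝ)/3) * X ^ ((2:ℝ)/3) := by
    rw [← ENNReal.rpow_add _ _ hX0 hXfin]
    norm_num
  have h4 : X ^ ((1:ℝ)/3) * X ^ ((2:ℝ)/3) ≤ ((3:ℝ≥0∞) ^ ((4:ℝ)/3) * Y ^ ((2:ℝ)/3)) * X ^ ((2:ℝ)/3) := by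
    calc X ^ ((1:ℝ)/3) * X ^ ((2:ℝ)/3) = X := hsplit.symm
    _ ≤ (3:ℝ≥0∞) ^ ((4:ℝ)/3) * (X ^ ((2:ℝ)/3) * Y ^ ((2:ℝ)/3)) := h3
    _ = ((3:ℝ≥0∞) ^ ((4:ℝ)/3) * Y ^ ((2:ℝ)/3)) * X ^ ((2:ℝ)/3) := by ring
  have hX23 : X ^ ((2:ℝ)/3) ≠ 0 := by
    simp [ENNReal.rpow_eq_zero_iff, hX0, hXfin]
  have hX23' : X ^ ((2:ℝ)/3) ≠ ∞ := by
    simp [ENNReal.rpow_eq_top_iff, hX0, hXfin]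
  have h5 : X ^ ((1:ℝ)/3) ≤ (3:ℝ≥0∞) ^ ((4:ℝ)/3) * Y ^ ((2:ℝ)/3) :=
    (ENNReal.mul_le_mul_iff_left hX23 hX23').1 h4
  have h6 : (X ^ ((1:ℝ)/3)) ^ (3:ℝ) ≤ ((3:ℝ≥0∞) ^ ((4:ℝ)/3) * Y ^ ((2:ℝ)/3)) ^ (3:ℝ) :=
    ENNReal.rpow_le_rpow h5 (by norm_num)
  calc X = (X ^ ((1:ℝ)/3)) ^ (3:ℝ) := by rw [← ENNReal.rpow_mul]; norm_num
    _ ≤ ((3:ℝ≥0∞) ^ ((4:ℝ)/3) * Y ^ ((2:ℝ)/3)) ^ (3:ℝ) := h6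
    _ = (3:ℝ≥0∞) ^ (4:ℝ) * Y ^ (2:ℝ) := by
        rw [ENNReal.mul_rpow_of_nonneg _ _ (by norm_num), ← ENNReal.rpow_mul, ← ENNReal.rpow_mul]
        norm_num
    _ = 81 * Y ^ (2:ℝ) := by
        rw [show ((3:ℝ≥0∞) ^ (4:ℝ)) = 81 from by
          rw [show (4:ℝ) = ((4:ℕ):ℝ) from by norm_num, ENNReal.rpow_natCast]; norm_num]

lemma lemC {g : (Fin 4 → ℝ) → ℝ} (hg : Differentiable ℝ g)
    (hg2 : ∫⁻ x, (‖g x‖₊ : ℝ≥0∞) ^ (2:ℝ) ≠ ∞) :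
    ∫⁻ x, (‖g x‖₊ : ℝ≥0∞) ^ (4:ℝ) ≤ 81 * (∫⁻ x, (‖fderiv ℝ g x‖₊ : ℝ≥0∞) ^ (2:ℝ)) ^ (2:ℝ) := by
  classical
  set Y := ∫⁻ x, (‖fderiv ℝ g x‖₊ : ℝ≥0∞) ^ (2:ℝ) with hYdef
  by_cases hY : Y = ∞
  · rw [hY, ENNReal.top_rpow_of_pos (by norm_num)]
    simp
  set L2 := ∫⁻ x, (‖g x‖₊ : ℝ≥0∞) ^ (2:ℝ) with hLdef
  -- bump function
  set χ : ContDiffBump (0 : Fin 4 → ℝ) := ⟨1, 2, one_pos, one_lt_two⟩ with hχdef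
  have hχdiff : Differentiable ℝ (χ : (Fin 4 → ℝ) → ℝ) :=
    (χ.contDiff (n := 1)).differentiable one_ne_zero
  obtain ⟨M₀, hM₀⟩ := ((χ.hasCompactSupport).fderiv ℝ).exists_bound_of_continuous
    ((χ.contDiff (n := 1)).continuous_fderiv one_ne_zero)
  have hM₀0 : 0 ≤ M₀ := le_trans (norm_nonneg _) (hM₀ 0)
  -- the cutoff functions
  have key : ∀ j : ℕ, ∀ k : ℕ, 1 ≤ k → (j : ℝ) ≤ k →
      ∫⁻ x in closedBall (0 : Fin 4 → ℝ) j, (‖g x‖₊ : ℝ≥0∞) ^ (4:ℝ)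
        ≤ 81 * ((Y ^ ((1:ℝ)/2) + ENNReal.ofReal (M₀ / k) * L2 ^ ((1:ℝ)/2)) ^ (2:ℝ)) ^ (2:ℝ) := by
    intro j k hk1 hjk
    have hkpos : (0:ℝ) < k := by exact_mod_cast hk1
    set Lk : (Fin 4 → ℝ) →L[ℝ] (Fin 4 → ℝ) :=
      (k:ℝ)⁻¹ • ContinuousLinearMap.id ℝ (Fin 4 → ℝ) with hLk
    have hLkapp : ∀ x, Lk x = (k:ℝ)⁻¹ • x := fun x => by
      rw [hLk]; simp
    have hLknorm : ‖Lk‖ ≤ (k:ℝ)⁻¹ := by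
      have h0 : ‖Lk‖ ≤ ‖(k:ℝ)⁻¹‖ * ‖ContinuousLinearMap.id ℝ (Fin 4 → ℝ)‖ := by
        rw [hLk]; exact ContinuousLinearMap.opNorm_smul_le _ _
      calc ‖Lk‖ ≤ ‖(k:ℝ)⁻¹‖ * ‖ContinuousLinearMap.id ℝ (Fin 4 → ℝ)‖ := h0
      _ ≤ ‖(k:ℝ)⁻¹‖ * 1 := by
          exact mul_le_mul_of_nonneg_left ContinuousLinearMap.norm_id_le (norm_nonneg _)
      _ = (k:ℝ)⁻¹ := by rw [mul_one, Real.norm_eq_abs, abs_of_nonneg (by positivity)]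
    set u : (Fin 4 → ℝ) → ℝ := fun x => χ (Lk x) * g x with hu
    have hud : ∀ x, HasFDerivAt u
        (χ (Lk x) • fderiv ℝ g x + g x • ((fderiv ℝ χ (Lk x)).comp Lk)) x := by
      intro x
      have h1 : HasFDerivAt (fun y => χ (Lk y)) ((fderiv ℝ χ (Lk x)).comp Lk) x :=
        ((hχdiff (Lk x)).hasFDerivAt).comp x (Lk.hasFDerivAt)
      exact h1.mul (hg x).hasFDerivAt
    have hudiff : Differentiable ℝ u := fun x => (hud x).differentiableAt
    have h2u : HasCompactSupport u := by
      refine HasCompactSupport.intro (isCompact_closedBall (0 : Fin 4 → ℝ) (2*k)) ?_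
      intro x hx
      have hxn : 2 * (k:ℝ) < ‖x‖ := by
        by_contra hcon
        exact hx (by simpa [dist_zero_right] using not_lt.1 hcon)
      have : χ (Lk x) = 0 := by
        apply χ.zero_of_le_dist
        have : χ.rOut = 2 := rfl
        rw [this, hLkapp, dist_zero_right, norm_smul, Real.norm_eq_abs,
          abs_of_nonneg (by positivity)]
        rw [le_inv_mul_iff₀ hkpos]
        linarith
      simp [hu, this]
    -- on closedBall j, u = g
    have hone : ∀ x ∈ closedBall (0 : Fin 4 → ℝ) j, u x = g x := by
      intro x hx
      have : χ (Lk x) = 1 := by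
        apply χ.one_of_mem_closedBall
        have hrIn : χ.rIn = 1 := rfl
        rw [mem_closedBall, dist_zero_right] at hx ⊢
        rw [hrIn, hLkapp, norm_smul, Real.norm_eq_abs, abs_of_nonneg (by positivity)]
        rw [inv_mul_le_iff₀ hkpos, mul_one]
        exact le_trans hx hjk
      simp [hu, this]
    -- derivative bound
    have hptd : ∀ x, (‖fderiv ℝ u x‖₊ : ℝ≥0∞)
        ≤ ((fun x => (‖fderiv ℝ g x‖₊ : ℝ≥0∞)) + (fun x => ENNReal.ofReal (M₀ / k) * (‖g x‖₊ : ℝ≥0∞))) x := by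
      intro x
      rw [(hud x).fderiv]
      simp only [Pi.add_apply]
      calc ((‖χ (Lk x) • fderiv ℝ g x + g x • ((fderiv ℝ χ (Lk x)).comp Lk)‖₊ : ℝ≥0∞))
          ≤ (‖χ (Lk x) • fderiv ℝ g x‖₊ : ℝ≥0∞) + (‖g x • ((fderiv ℝ χ (Lk x)).comp Lk)‖₊ : ℝ≥0∞) := by
            exact_mod_cast ENNReal.coe_le_coe.2 (nnnorm_add_le _ _)
        _ ≤ (‖fderiv ℝ g x‖₊ : ℝ≥0∞) + ENNReal.ofReal (M₀ / k) * (‖g x‖₊ : ℝ≥0∞) := by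
            have ha : ((‖χ (Lk x) • fderiv ℝ g x‖₊ : ℝ≥0∞)) ≤ (‖fderiv ℝ g x‖₊ : ℝ≥0∞) := by
              rw [← ofReal_norm_eq_coe_nnnorm, ← ofReal_norm_eq_coe_nnnorm]
              apply ENNReal.ofReal_le_ofReal
              have h1 : ‖χ (Lk x) • fderiv ℝ g x‖ = ‖χ (Lk x)‖ * ‖fderiv ℝ g x‖ :=
                norm_smul _ _
              rw [h1, Real.norm_eq_abs, abs_of_nonneg χ.nonneg]
              exact mul_le_of_le_one_left (norm_nonneg _) χ.le_one
            have hb : ((‖g x • ((fderiv ℝ χ (Lk x)).comp Lk)‖₊ : ℝ≥0∞))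
                ≤ ENNReal.ofReal (M₀ / k) * (‖g x‖₊ : ℝ≥0∞) := by
              rw [← ofReal_norm_eq_coe_nnnorm, ← ofReal_norm_eq_coe_nnnorm,
                ← ENNReal.ofReal_mul (by positivity)]
              apply ENNReal.ofReal_le_ofReal
              have hT : ‖(fderiv ℝ χ (Lk x)).comp Lk‖ ≤ M₀ / k := by
                calc ‖(fderiv ℝ χ (Lk x)).comp Lk‖ ≤ ‖fderiv ℝ χ (Lk x)‖ * ‖Lk‖ :=
                      ContinuousLinearMap.opNorm_comp_le _ _
                  _ ≤ M₀ * (k:ℝ)⁻¹ := by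
                      exact mul_le_mul (hM₀ _) hLknorm (norm_nonneg _) hM₀0
                  _ = M₀ / k := by rw [div_eq_mul_inv]
              calc ‖g x • ((fderiv ℝ χ (Lk x)).comp Lk)‖
                  ≤ ‖g x‖ * ‖(fderiv ℝ χ (Lk x)).comp Lk‖ :=
                    ContinuousLinearMap.opNorm_smul_le _ _
                _ ≤ ‖g x‖ * (M₀ / k) := mul_le_mul_of_nonneg_left hT (norm_nonneg _)
                _ = M₀ / k * ‖g x‖ := mul_comm _ _
            exact add_le_add ha hb
      -- derivative L² bound via Minkowski
    have hZ : (∫⁻ x, (‖fderiv ℝ u x‖₊ : ℝ≥0∞) ^ (2:ℝ)) ^ ((1:ℝ)/2)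
        ≤ Y ^ ((1:ℝ)/2) + ENNReal.ofReal (M₀ / k) * L2 ^ ((1:ℝ)/2) := by
      have hmeas1 : AEMeasurable (fun x => (‖fderiv ℝ g x‖₊ : ℝ≥0∞)) volume :=
        ((measurable_fderiv ℝ g).ennnorm).aemeasurable
      have hmeas2 : AEMeasurable (fun x => ENNReal.ofReal (M₀ / k) * (‖g x‖₊ : ℝ≥0∞)) volume :=
        (hg.continuous.measurable.ennnorm.const_mul _).aemeasurable
      calc (∫⁻ x, (‖fderiv ℝ u x‖₊ : ℝ≥0∞) ^ (2:ℝ)) ^ ((1:ℝ)/2)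
          ≤ (∫⁻ x, (((fun x => (‖fderiv ℝ g x‖₊ : ℝ≥0∞)) + (fun x => ENNReal.ofReal (M₀ / k) * (‖g x‖₊ : ℝ≥0∞))) x) ^ (2:ℝ)) ^ ((1:ℝ)/2) := by
            apply ENNReal.rpow_le_rpow _ (by norm_num)
            exact lintegral_mono fun x => ENNReal.rpow_le_rpow (hptd x) (by norm_num)
        _ ≤ (∫⁻ x, (‖fderiv ℝ g x‖₊ : ℝ≥0∞) ^ (2:ℝ)) ^ ((1:ℝ)/2)
              + (∫⁻ x, (ENNReal.ofReal (M₀ / k) * (‖g x‖₊ : ℝ≥0∞)) ^ (2:ℝ)) ^ ((1:ℝ)/2) :=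
            ENNReal.lintegral_Lp_add_le hmeas1 hmeas2 one_le_two
        _ = Y ^ ((1:ℝ)/2) + ENNReal.ofReal (M₀ / k) * L2 ^ ((1:ℝ)/2) := by
            have hsecond : (∫⁻ x, (ENNReal.ofReal (M₀ / k) * (‖g x‖₊ : ℝ≥0∞)) ^ (2:ℝ)) ^ ((1:ℝ)/2)
                = ENNReal.ofReal (M₀ / k) * L2 ^ ((1:ℝ)/2) := by
              have h1 : ∀ x, (ENNReal.ofReal (M₀ / k) * (‖g x‖₊ : ℝ≥0∞)) ^ (2:ℝ)
                  = ENNReal.ofReal (M₀ / k) ^ (2:ℝ) * (‖g x‖₊ : ℝ≥0∞) ^ (2:ℝ) :=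
                fun x => ENNReal.mul_rpow_of_nonneg _ _ (by norm_num)
              simp_rw [h1]
              rw [lintegral_const_mul _ (by exact hg.continuous.measurable.ennnorm.pow_const _),
                ENNReal.mul_rpow_of_nonneg _ _ (by norm_num), ← ENNReal.rpow_mul,
                show (2:ℝ) * (1/2) = 1 from by norm_num, ENNReal.rpow_one, hLdef]
            rw [hsecond]
    -- conclude
    calc ∫⁻ x in closedBall (0 : Fin 4 → ℝ) j, (‖g x‖₊ : ℝ≥0∞) ^ (4:ℝ)
        = ∫⁻ x in closedBall (0 : Fin 4 → ℝ) j, (‖u x‖₊ : ℝ≥0∞) ^ (4:ℝ) := by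
          refine setLIntegral_congr_fun (measurableSet_closedBall) ?_
          intro x hx
          simp only
          rw [hone x hx]
      _ ≤ ∫⁻ x, (‖u x‖₊ : ℝ≥0∞) ^ (4:ℝ) := lintegral_mono' Measure.restrict_le_self le_rfl
      _ ≤ 81 * (∫⁻ x, (‖fderiv ℝ u x‖₊ : ℝ≥0∞) ^ (2:ℝ)) ^ (2:ℝ) := lemB hudiff h2u
      _ ≤ 81 * ((Y ^ ((1:ℝ)/2) + ENNReal.ofReal (M₀ / k) * L2 ^ ((1:ℝ)/2)) ^ (2:ℝ)) ^ (2:ℝ) := by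
          gcongr
          calc ∫⁻ x, (‖fderiv ℝ u x‖₊ : ℝ≥0∞) ^ (2:ℝ)
              = ((∫⁻ x, (‖fderiv ℝ u x‖₊ : ℝ≥0∞) ^ (2:ℝ)) ^ ((1:ℝ)/2)) ^ (2:ℝ) := by
                rw [← ENNReal.rpow_mul]; norm_num
            _ ≤ (Y ^ ((1:ℝ)/2) + ENNReal.ofReal (M₀ / k) * L2 ^ ((1:ℝ)/2)) ^ (2:ℝ) :=
                ENNReal.rpow_le_rpow hZ (by norm_num)
  -- limit of the bound
  have htendsto : Tendsto
      (fun k : ℕ => 81 * ((Y ^ ((1:ℝ)/2) + ENNReal.ofReal (M₀ / k) * L2 ^ ((1:ℝ)/2)) ^ (2:ℝ)) ^ (2:ℝ))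
      atTop (𝓝 (81 * Y ^ (2:ℝ))) := by
    have h1 : Tendsto (fun k : ℕ => ENNReal.ofReal (M₀ / k)) atTop (𝓝 0) := by
      have := ENNReal.tendsto_ofReal (tendsto_const_div_atTop_nhds_zero_nat M₀)
      simpa using this
    have hL2fin : L2 ^ ((1:ℝ)/2) ≠ ∞ := by
      simp [ENNReal.rpow_eq_top_iff, hg2]
    have h2 : Tendsto (fun k : ℕ => ENNReal.ofReal (M₀ / k) * L2 ^ ((1:ℝ)/2)) atTop (𝓝 0) := by
      have := ENNReal.Tendsto.mul_const h1 (Or.inr hL2fin)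
      simpa using this
    have h3 : Tendsto (fun k : ℕ => Y ^ ((1:ℝ)/2) + ENNReal.ofReal (M₀ / k) * L2 ^ ((1:ℝ)/2))
        atTop (𝓝 (Y ^ ((1:ℝ)/2))) := by
      have := Tendsto.add (tendsto_const_nhds (x := Y ^ ((1:ℝ)/2))) h2
      simpa using this
    have h4 : Tendsto (fun k : ℕ => ((Y ^ ((1:ℝ)/2) + ENNReal.ofReal (M₀ / k) * L2 ^ ((1:ℝ)/2)) ^ (2:ℝ)) ^ (2:ℝ))
        atTop (𝓝 (((Y ^ ((1:ℝ)/2)) ^ (2:ℝ)) ^ (2:ℝ))) := by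
      exact ((ENNReal.continuous_rpow_const.tendsto _).comp
        ((ENNReal.continuous_rpow_const.tendsto _).comp h3))
    have h5 := ENNReal.Tendsto.const_mul h4 (Or.inr (by norm_num : (81:ℝ≥0∞) ≠ ∞))
    have heq : ((Y ^ ((1:ℝ)/2)) ^ (2:ℝ)) ^ (2:ℝ) = Y ^ (2:ℝ) := by
      rw [← ENNReal.rpow_mul, ← ENNReal.rpow_mul]; norm_num
    rw [heq] at h5
    exact h5
  -- each ball integral is bounded by the limit
  have hball : ∀ j : ℕ, ∫⁻ x in closedBall (0 : Fin 4 → ℝ) j, (‖g x‖₊ : ℝ≥0∞) ^ (4:ℝ)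
      ≤ 81 * Y ^ (2:ℝ) := by
    intro j
    refine ge_of_tendsto htendsto ?_
    filter_upwards [eventually_ge_atTop (max j 1)] with k hk
    exact key j k (le_trans (le_max_right j 1) hk) (by exact_mod_cast le_trans (le_max_left j 1) hk)
  -- monotone convergence over balls
  have hsup : ∫⁻ x, (‖g x‖₊ : ℝ≥0∞) ^ (4:ℝ)
      = ⨆ j : ℕ, ∫⁻ x in closedBall (0 : Fin 4 → ℝ) j, (‖g x‖₊ : ℝ≥0∞) ^ (4:ℝ) := by
    have hmeas : Measurable (fun x : Fin 4 → ℝ => (‖g x‖₊ : ℝ≥0∞) ^ (4:ℝ)) :=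
      hg.continuous.measurable.ennnorm.pow_const _
    have hmono : Monotone (fun j : ℕ => (closedBall (0 : Fin 4 → ℝ) (j:ℝ)).indicator
        (fun x => (‖g x‖₊ : ℝ≥0∞) ^ (4:ℝ))) := by
      intro i j hij
      exact indicator_le_indicator_of_subset
        (closedBall_subset_closedBall (by exact_mod_cast hij)) (fun x => zero_le)
    have hpt : ∀ x : Fin 4 → ℝ, (‖g x‖₊ : ℝ≥0∞) ^ (4:ℝ)
        = ⨆ j : ℕ, (closedBall (0 : Fin 4 → ℝ) (j:ℝ)).indicator
            (fun x => (‖g x‖₊ : ℝ≥0∞) ^ (4:ℝ)) x := by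
      intro x
      refine le_antisymm ?_ (iSup_le fun j => indicator_le_self _ _ x)
      refine le_iSup_of_le ⌈‖x‖⌉₊ ?_
      rw [indicator_of_mem]
      rw [mem_closedBall, dist_zero_right]
      exact Nat.le_ceil _
    calc ∫⁻ x, (‖g x‖₊ : ℝ≥0∞) ^ (4:ℝ)
        = ∫⁻ x, ⨆ j : ℕ, (closedBall (0 : Fin 4 → ℝ) (j:ℝ)).indicator
            (fun x => (‖g x‖₊ : ℝ≥0∞) ^ (4:ℝ)) x := lintegral_congr hpt
      _ = ⨆ j : ℕ, ∫⁻ x, (closedBall (0 : Fin 4 → ℝ) (j:ℝ)).indicator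
            (fun x => (‖g x‖₊ : ℝ≥0∞) ^ (4:ℝ)) x :=
          lintegral_iSup (fun j => hmeas.indicator measurableSet_closedBall) hmono
      _ = ⨆ j : ℕ, ∫⁻ x in closedBall (0 : Fin 4 → ℝ) (j:ℝ), (‖g x‖₊ : ℝ≥0∞) ^ (4:ℝ) :=
          iSup_congr fun j => lintegral_indicator measurableSet_closedBall _
  rw [hsup]
  exact iSup_le hball

lemma lemD : ∃ K : ℝ≥0, 0 < K ∧ ∀ g : EuclideanSpace ℝ (Fin 4) → ℝ, Differentiable ℝ g →
    (∫⁻ x, (‖g x‖₊ : ℝ≥0∞) ^ (2:ℝ)) ≠ ∞ →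
    ∫⁻ x, (‖g x‖₊ : ℝ≥0∞) ^ (4:ℝ)
      ≤ (K : ℝ≥0∞) * (∫⁻ x, (‖fderiv ℝ g x‖₊ : ℝ≥0∞) ^ (2:ℝ)) ^ (2:ℝ) := by
  classical
  set T : (Fin 4 → ℝ) →L[ℝ] EuclideanSpace ℝ (Fin 4) :=
    (EuclideanSpace.equiv (Fin 4) ℝ).symm.toContinuousLinearMap with hT
  set c : ℝ≥0 := ‖T‖₊ with hc
  refine ⟨81 * (c + 1)^4, by positivity, ?_⟩
  intro g hg hg2
  have hmp : MeasurePreserving (⇑(MeasurableEquiv.toLp 2 (Fin 4 → ℝ)))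
      (volume : Measure (Fin 4 → ℝ)) (volume : Measure (EuclideanSpace ℝ (Fin 4))) :=
    PiLp.volume_preserving_toLp (Fin 4)
  have hmp' : MeasurePreserving (fun y : Fin 4 → ℝ => T y)
      (volume : Measure (Fin 4 → ℝ)) (volume : Measure (EuclideanSpace ℝ (Fin 4))) := hmp
  set gt : (Fin 4 → ℝ) → ℝ := fun y => g (T y) with hgt
  have hder : ∀ y, HasFDerivAt gt ((fderiv ℝ g (T y)).comp T) y :=
    fun y => ((hg (T y)).hasFDerivAt).comp y T.hasFDerivAt
  have hgtd : Differentiable ℝ gt := fun y => (hder y).differentiableAt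
  have htrans : ∀ (p : ℝ), ∫⁻ y, (‖gt y‖₊ : ℝ≥0∞) ^ p = ∫⁻ x, (‖g x‖₊ : ℝ≥0∞) ^ p :=
    fun p => hmp'.lintegral_comp (f := fun x => (‖g x‖₊ : ℝ≥0∞) ^ p)
      ((hg.continuous.measurable.ennnorm).pow_const _)
  have hgt2 : ∫⁻ y, (‖gt y‖₊ : ℝ≥0∞) ^ (2:ℝ) ≠ ∞ := by rw [htrans]; exact hg2
  have hC := lemC hgtd hgt2
  have hfd : ∀ y, (‖fderiv ℝ gt y‖₊ : ℝ≥0∞) ^ (2:ℝ)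
      ≤ (c : ℝ≥0∞) ^ (2:ℝ) * (‖fderiv ℝ g (T y)‖₊ : ℝ≥0∞) ^ (2:ℝ) := by
    intro y
    rw [(hder y).fderiv, ← ENNReal.mul_rpow_of_nonneg _ _ (by norm_num : (0:ℝ) ≤ 2)]
    apply ENNReal.rpow_le_rpow _ (by norm_num)
    rw [mul_comm]
    calc ((‖(fderiv ℝ g (T y)).comp T‖₊ : ℝ≥0∞))
        ≤ ((‖fderiv ℝ g (T y)‖₊ * ‖T‖₊ : ℝ≥0) : ℝ≥0∞) :=
          ENNReal.coe_le_coe.2 (ContinuousLinearMap.opNNNorm_comp_le _ _)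
      _ = (‖fderiv ℝ g (T y)‖₊ : ℝ≥0∞) * (c : ℝ≥0∞) := by rw [ENNReal.coe_mul, hc]
  have hfdint : ∫⁻ y, (‖fderiv ℝ gt y‖₊ : ℝ≥0∞) ^ (2:ℝ)
      ≤ (c : ℝ≥0∞) ^ (2:ℝ) * ∫⁻ x, (‖fderiv ℝ g x‖₊ : ℝ≥0∞) ^ (2:ℝ) := by
    calc ∫⁻ y, (‖fderiv ℝ gt y‖₊ : ℝ≥0∞) ^ (2:ℝ)
        ≤ ∫⁻ y, (c : ℝ≥0∞) ^ (2:ℝ) * (‖fderiv ℝ g (T y)‖₊ : ℝ≥0∞) ^ (2:ℝ) :=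
          lintegral_mono fun y => hfd y
      _ = (c : ℝ≥0∞) ^ (2:ℝ) * ∫⁻ y, (‖fderiv ℝ g (T y)‖₊ : ℝ≥0∞) ^ (2:ℝ) :=
          lintegral_const_mul _ (by
            have hm : Measurable (fun x : EuclideanSpace ℝ (Fin 4) =>
                (‖fderiv ℝ g x‖₊ : ℝ≥0∞) ^ (2:ℝ)) :=
              ((measurable_fderiv ℝ g).ennnorm).pow_const _
            exact hm.comp (MeasurableEquiv.toLp 2 (Fin 4 → ℝ)).measurable)
      _ = (c : ℝ≥0∞) ^ (2:ℝ) * ∫⁻ x, (‖fderiv ℝ g x‖₊ : ℝ≥0∞) ^ (2:ℝ) := by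
          congr 1
          exact hmp'.lintegral_comp (((measurable_fderiv ℝ g).ennnorm).pow_const _)
  calc ∫⁻ x, (‖g x‖₊ : ℝ≥0∞) ^ (4:ℝ)
      = ∫⁻ y, (‖gt y‖₊ : ℝ≥0∞) ^ (4:ℝ) := (htrans 4).symm
    _ ≤ 81 * (∫⁻ y, (‖fderiv ℝ gt y‖₊ : ℝ≥0∞) ^ (2:ℝ)) ^ (2:ℝ) := hC
    _ ≤ 81 * ((c : ℝ≥0∞) ^ (2:ℝ) * ∫⁻ x, (‖fderiv ℝ g x‖₊ : ℝ≥0∞) ^ (2:ℝ)) ^ (2:ℝ) := by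
        gcongr
    _ = 81 * ((c : ℝ≥0∞) ^ (2:ℝ)) ^ (2:ℝ) * (∫⁻ x, (‖fderiv ℝ g x‖₊ : ℝ≥0∞) ^ (2:ℝ)) ^ (2:ℝ) := by
        rw [ENNReal.mul_rpow_of_nonneg _ _ (by norm_num : (0:ℝ) ≤ 2), mul_assoc]
    _ ≤ ((81 * (c + 1)^4 : ℝ≥0) : ℝ≥0∞) * (∫⁻ x, (‖fderiv ℝ g x‖₊ : ℝ≥0∞) ^ (2:ℝ)) ^ (2:ℝ) := by
        have hcoef : (81:ℝ≥0∞) * ((c : ℝ≥0∞) ^ (2:ℝ)) ^ (2:ℝ) ≤ ((81 * (c + 1)^4 : ℝ≥0) : ℝ≥0∞) := by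
          rw [← ENNReal.rpow_mul]
          have h1 : (c : ℝ≥0∞) ^ ((2:ℝ) * 2) ≤ (((c+1)^4 : ℝ≥0) : ℝ≥0∞) := by
            rw [show ((2:ℝ) * 2) = ((4:ℕ):ℝ) from by norm_num, ENNReal.rpow_natCast,
              ← ENNReal.coe_pow]
            exact ENNReal.coe_le_coe.2 (pow_le_pow_left₀ (zero_le)
              (le_add_of_nonneg_right zero_le_one) 4)
          calc (81:ℝ≥0∞) * (c : ℝ≥0∞) ^ ((2:ℝ) * 2) ≤ 81 * (((c+1)^4 : ℝ≥0) : ℝ≥0∞) := by gcongr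
            _ = _ := by rw [ENNReal.coe_mul]; norm_num
        exact mul_le_mul_of_nonneg_right hcoef (zero_le)

/-- Lemma 3.5 with `p = 3/2`: there exists `C > 0` such that for every nonnegative
`f ∈ W^{1,2}(ℝ⁴) ∩ L¹(ℝ⁴)` and every `N ≥ 1`,
`‖f‖_{3/2}^{3/2} ≤ (C/√(log(1+N²))) ‖(1+f)log(1+f)‖₁^{1/2} ∫ |∇f|²/(1+f) + C N^{1/2} ‖f‖₁`. -/
theorem L_three_halves_entropy_estimate :
    ∃ C : ℝ, 0 < C ∧
      ∀ f : EuclideanSpace ℝ (Fin 4) → ℝ,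
        (∀ x, 0 ≤ f x) →
        Integrable f →
        MemLp f 2 →
        Differentiable ℝ f →
        MemLp (fun x => fderiv ℝ f x) 2 →
        Integrable (fun x => ‖fderiv ℝ f x‖ ^ 2 / (1 + f x)) →
        ∀ N : ℝ, 1 ≤ N →
          (∫ x, (f x) ^ ((3 : ℝ) / 2)) ≤
            C / Real.sqrt (Real.log (1 + N ^ 2)) *
                (∫ x, (1 + f x) * Real.log (1 + f x)) ^ ((1 : ℝ) / 2) *
                (∫ x, ‖fderiv ℝ f x‖ ^ 2 / (1 + f x))
              + C * N ^ ((1 : ℝ) / 2) * ∫ x, f x := by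
  classical
  obtain ⟨K, hK0, hKsob⟩ := lemD
  set D : ℝ := Real.sqrt (256 * (K:ℝ)) with hD
  have hD0 : 0 ≤ D := Real.sqrt_nonneg _
  refine ⟨Real.sqrt 2 * D + Real.sqrt 2 + 1, by positivity, ?_⟩
  set C : ℝ := Real.sqrt 2 * D + Real.sqrt 2 + 1 with hC
  have hC1 : 1 ≤ C := by
    have h2 : (0:ℝ) ≤ Real.sqrt 2 * D := by positivity
    have h3 : (0:ℝ) ≤ Real.sqrt 2 := Real.sqrt_nonneg _
    rw [hC]; linarith
  have hC0 : 0 < C := lt_of_lt_of_le one_pos hC1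
  intro f hf0 hfi hf2 hfd hfd2 hgi N hN
  have hfm : Measurable f := hfd.continuous.measurable
  have h1pf : ∀ x, (0:ℝ) < 1 + f x := fun x => by linarith [hf0 x]
  -- the function g = sqrt(1+f) - 1
  set g : EuclideanSpace ℝ (Fin 4) → ℝ := fun x => Real.sqrt (1 + f x) - 1 with hgdef
  have hsq1 : ∀ x, 1 ≤ Real.sqrt (1 + f x) := by
    intro x
    have h := Real.sqrt_le_sqrt (show (1:ℝ) ≤ 1 + f x by linarith [hf0 x])
    rwa [Real.sqrt_one] at h
  have hg0 : ∀ x, 0 ≤ g x := fun x => sub_nonneg.2 (hsq1 x)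
  have hsq2 : ∀ x, Real.sqrt (1 + f x) ^ 2 = 1 + f x := fun x => Real.sq_sqrt (h1pf x).le
  have hg2f : ∀ x, g x ^ 2 ≤ f x := by
    intro x
    have h1 := hsq1 x
    have h2 := hsq2 x
    show (Real.sqrt (1 + f x) - 1) ^ 2 ≤ f x
    nlinarith
  -- derivative of g
  have hgder : ∀ x, HasFDerivAt g ((1 / (2 * Real.sqrt (1 + f x))) • fderiv ℝ f x) x := by
    intro x
    have h1 : HasDerivAt Real.sqrt (1 / (2 * Real.sqrt (1 + f x))) (1 + f x) := by
      have := Real.hasDerivAt_sqrt (x := 1 + f x) (ne_of_gt (h1pf x))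
      exact this
    have h2 : HasFDerivAt (fun y => 1 + f y) (fderiv ℝ f x) x :=
      (hfd x).hasFDerivAt.const_add 1
    have h3 := h1.comp_hasFDerivAt x h2
    exact h3.sub_const 1
  have hgd : Differentiable ℝ g := fun x => (hgder x).differentiableAt
  -- gradient quantity
  set G : ℝ := ∫ x, ‖fderiv ℝ f x‖ ^ 2 / (1 + f x) with hG
  have hG0 : 0 ≤ G := integral_nonneg fun x => div_nonneg (by positivity) (h1pf x).le
  have hGlint : ∫⁻ x, ENNReal.ofReal (‖fderiv ℝ f x‖ ^ 2 / (1 + f x)) = ENNReal.ofReal G :=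
    (ofReal_integral_eq_lintegral_ofReal hgi (ae_of_all _ fun x => div_nonneg (by positivity) (h1pf x).le)).symm
  have hgn : ∀ x, (‖fderiv ℝ g x‖₊ : ℝ≥0∞) ^ (2:ℝ)
      ≤ ENNReal.ofReal (‖fderiv ℝ f x‖ ^ 2 / (1 + f x)) := by
    intro x
    rw [← ofReal_norm_eq_coe_nnnorm, ENNReal.ofReal_rpow_of_nonneg (norm_nonneg _) (by norm_num)]
    apply ENNReal.ofReal_le_ofReal
    rw [show ‖fderiv ℝ g x‖ ^ (2:ℝ) = ‖fderiv ℝ g x‖ ^ (2:ℕ) from by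
      rw [show (2:ℝ) = ((2:ℕ):ℝ) from by norm_num, Real.rpow_natCast]]
    rw [(hgder x).fderiv]
    have h1 : ‖(1 / (2 * Real.sqrt (1 + f x))) • fderiv ℝ f x‖
        = |1 / (2 * Real.sqrt (1 + f x))| * ‖fderiv ℝ f x‖ := by
      rw [norm_smul, Real.norm_eq_abs]
    have hsp : 0 < Real.sqrt (1 + f x) := lt_of_lt_of_le one_pos (hsq1 x)
    rw [h1, abs_of_nonneg (by positivity)]
    have h2 := hsq2 x
    rw [mul_pow, div_pow, mul_pow]
    rw [h2, one_pow]
    rw [div_mul_eq_mul_div, one_mul]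
    apply div_le_div_of_nonneg_left (by positivity) (h1pf x)
    nlinarith [hf0 x]
  have hgradle : ∫⁻ x, (‖fderiv ℝ g x‖₊ : ℝ≥0∞) ^ (2:ℝ) ≤ ENNReal.ofReal G := by
    rw [← hGlint]; exact lintegral_mono fun x => hgn x
  -- g is L²-bounded by f
  have hΦint : ∫⁻ x, ENNReal.ofReal (f x) = ENNReal.ofReal (∫ x, f x) :=
    (ofReal_integral_eq_lintegral_ofReal hfi (ae_of_all _ hf0)).symm
  have hgL2 : (∫⁻ x, (‖g x‖₊ : ℝ≥0∞) ^ (2:ℝ)) ≠ ∞ := by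
    have hle : ∫⁻ x, (‖g x‖₊ : ℝ≥0∞) ^ (2:ℝ) ≤ ∫⁻ x, ENNReal.ofReal (f x) := by
      apply lintegral_mono
      intro x
      show (‖g x‖₊ : ℝ≥0∞) ^ (2:ℝ) ≤ ENNReal.ofReal (f x)
      rw [← ofReal_norm_eq_coe_nnnorm, ENNReal.ofReal_rpow_of_nonneg (norm_nonneg _) (by norm_num)]
      apply ENNReal.ofReal_le_ofReal
      rw [show ‖g x‖ ^ (2:ℝ) = ‖g x‖ ^ (2:ℕ) from by
        rw [show (2:ℝ) = ((2:ℕ):ℝ) from by norm_num, Real.rpow_natCast]]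
      rw [Real.norm_eq_abs, sq_abs]
      exact hg2f x
    exact ne_top_of_le_ne_top (by rw [hΦint]; exact ENNReal.ofReal_ne_top) hle
  -- Sobolev inequality for g
  have hsob : ∫⁻ x, (‖g x‖₊ : ℝ≥0∞) ^ (4:ℝ)
      ≤ (K : ℝ≥0∞) * (ENNReal.ofReal G) ^ (2:ℝ) := by
    calc ∫⁻ x, (‖g x‖₊ : ℝ≥0∞) ^ (4:ℝ)
        ≤ (K : ℝ≥0∞) * (∫⁻ x, (‖fderiv ℝ g x‖₊ : ℝ≥0∞) ^ (2:ℝ)) ^ (2:ℝ) := hKsob g hgd hgL2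
      _ ≤ (K : ℝ≥0∞) * (ENNReal.ofReal G) ^ (2:ℝ) := by gcongr
  -- entropy
  set Ent : ℝ := ∫ x, (1 + f x) * Real.log (1 + f x) with hEnt
  have hlogf0 : ∀ x, 0 ≤ Real.log (1 + f x) := fun x => Real.log_nonneg (by linarith [hf0 x])
  have hEnt0 : 0 ≤ Ent := integral_nonneg fun x => mul_nonneg (h1pf x).le (hlogf0 x)
  have hfsq : Integrable (fun x => f x ^ 2) := hf2.integrable_sq
  have hlogcont : Continuous (fun x => Real.log (1 + f x)) := by
    rw [continuous_iff_continuousAt]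
    intro x
    have h := ContinuousAt.comp (g := Real.log) (f := fun y => 1 + f y) (x := x)
      (Real.continuousAt_log (ne_of_gt (h1pf x)))
      ((continuous_const.add hfd.continuous).continuousAt)
    exact h
  have hEntInt : Integrable (fun x => (1 + f x) * Real.log (1 + f x)) := by
    apply Integrable.mono' (hfi.add hfsq)
    · exact ((continuous_const.add hfd.continuous).mul hlogcont).aestronglyMeasurable
    · refine ae_of_all _ fun x => ?_
      simp only [Pi.add_apply]
      rw [Real.norm_eq_abs, abs_of_nonneg (mul_nonneg (h1pf x).le (hlogf0 x))]
      have hlb : Real.log (1 + f x) ≤ f x := by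
        have := Real.log_le_sub_one_of_pos (h1pf x)
        linarith
      have h2 : (1 + f x) * Real.log (1 + f x) ≤ (1 + f x) * f x :=
        mul_le_mul_of_nonneg_left hlb (h1pf x).le
      nlinarith [h2, hf0 x]
  have hEntlint : ∫⁻ x, ENNReal.ofReal ((1 + f x) * Real.log (1 + f x)) = ENNReal.ofReal Ent :=
    (ofReal_integral_eq_lintegral_ofReal hEntInt
      (ae_of_all _ fun x => mul_nonneg (h1pf x).le (hlogf0 x))).symm
  -- integrability of f^(3/2)
  have hf32cont : Continuous (fun x => f x ^ ((3:ℝ)/2)) := by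
    rw [continuous_iff_continuousAt]
    intro x
    exact (Real.continuousAt_rpow_const (f x) _ (Or.inr (by norm_num))).comp
      hfd.continuous.continuousAt
  have hf32bound : ∀ x, f x ^ ((3:ℝ)/2) ≤ f x + f x ^ 2 := by
    intro x
    rcases eq_or_lt_of_le (hf0 x) with h | h
    · rw [← h, Real.zero_rpow (by norm_num)]; norm_num
    rcases le_or_gt (f x) 1 with h1 | h1
    · have : f x ^ ((3:ℝ)/2) ≤ f x ^ (1:ℝ) :=
        Real.rpow_le_rpow_of_exponent_ge h h1 (by norm_num)
      rw [Real.rpow_one] at this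
      nlinarith
    · have : f x ^ ((3:ℝ)/2) ≤ f x ^ (2:ℝ) :=
        Real.rpow_le_rpow_of_exponent_le h1.le (by norm_num)
      rw [show f x ^ (2:ℝ) = f x ^ (2:ℕ) from by
        rw [show (2:ℝ) = ((2:ℕ):ℝ) from by norm_num, Real.rpow_natCast]] at this
      nlinarith [hf0 x]
  have hf32int : Integrable (fun x => f x ^ ((3:ℝ)/2)) := by
    apply Integrable.mono' (hfi.add hfsq)
    · exact hf32cont.aestronglyMeasurable
    · refine ae_of_all _ fun x => ?_
      simp only [Pi.add_apply]
      rw [Real.norm_eq_abs, abs_of_nonneg (Real.rpow_nonneg (hf0 x) _)]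
      exact hf32bound x
  have hLHS : ENNReal.ofReal (∫ x, f x ^ ((3:ℝ)/2))
      = ∫⁻ x, (ENNReal.ofReal (f x)) ^ ((3:ℝ)/2) := by
    rw [ofReal_integral_eq_lintegral_ofReal hf32int
      (ae_of_all _ fun x => Real.rpow_nonneg (hf0 x) _)]
    exact lintegral_congr fun x =>
      (ENNReal.ofReal_rpow_of_nonneg (hf0 x) (by norm_num)).symm
  -- now the ENNReal computation
  set Φ : EuclideanSpace ℝ (Fin 4) → ℝ≥0∞ := fun x => ENNReal.ofReal (f x) with hΦ
  have hΦm : Measurable Φ := hfm.ennreal_ofReal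
  set S : Set (EuclideanSpace ℝ (Fin 4)) := {x | N < f x} with hSdef
  have hS : MeasurableSet S := measurableSet_lt measurable_const hfm
  set L1 : ℝ := Real.log (1 + N) with hL1
  set L2 : ℝ := Real.log (1 + N ^ 2) with hL2
  have hlogN : 0 < L1 := Real.log_pos (by linarith)
  have hL2pos : 0 < L2 := Real.log_pos (by nlinarith)
  -- easy part
  have stepEasy : ∫⁻ x in Sᶜ, Φ x ^ ((3:ℝ)/2)
      ≤ ENNReal.ofReal (Real.sqrt N) * ENNReal.ofReal (∫ x, f x) := by
    have hpt : ∀ x ∈ Sᶜ, Φ x ^ ((3:ℝ)/2) ≤ ENNReal.ofReal (Real.sqrt N) * Φ x := by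
      intro x hx
      have hxle : f x ≤ N := not_lt.1 hx
      show (ENNReal.ofReal (f x)) ^ ((3:ℝ)/2) ≤ ENNReal.ofReal (Real.sqrt N) * ENNReal.ofReal (f x)
      rw [ENNReal.ofReal_rpow_of_nonneg (hf0 x) (by norm_num),
        ← ENNReal.ofReal_mul (Real.sqrt_nonneg N)]
      apply ENNReal.ofReal_le_ofReal
      rcases eq_or_lt_of_le (hf0 x) with h | h
      · rw [← h, Real.zero_rpow (by norm_num)]
        positivity
      · rw [show (3:ℝ)/2 = 1 + 1/2 from by norm_num, Real.rpow_add h, Real.rpow_one,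
          ← Real.sqrt_eq_rpow]
        have h1 : Real.sqrt (f x) ≤ Real.sqrt N := Real.sqrt_le_sqrt hxle
        have h2 : 0 ≤ Real.sqrt (f x) := Real.sqrt_nonneg _
        nlinarith [hf0 x]
    calc ∫⁻ x in Sᶜ, Φ x ^ ((3:ℝ)/2)
        ≤ ∫⁻ x in Sᶜ, ENNReal.ofReal (Real.sqrt N) * Φ x := setLIntegral_mono' hS.compl hpt
      _ = ENNReal.ofReal (Real.sqrt N) * ∫⁻ x in Sᶜ, Φ x := lintegral_const_mul _ hΦm
      _ ≤ ENNReal.ofReal (Real.sqrt N) * ∫⁻ x, Φ x :=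
          mul_le_mul_right (lintegral_mono' Measure.restrict_le_self le_rfl) _
      _ = ENNReal.ofReal (Real.sqrt N) * ENNReal.ofReal (∫ x, f x) := by rw [hΦint]
  -- Cauchy-Schwarz on S
  have conj22 : (2:ℝ).HolderConjugate 2 := (Real.holderConjugate_iff (p := 2) (q := 2)).2 ⟨one_lt_two, by norm_num⟩
  have stepCS : ∫⁻ x in S, Φ x ^ ((3:ℝ)/2)
      ≤ (∫⁻ x in S, Φ x ^ (2:ℝ)) ^ ((1:ℝ)/2) * (∫⁻ x in S, Φ x) ^ ((1:ℝ)/2) := by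
    have h := ENNReal.lintegral_mul_le_Lp_mul_Lq (volume.restrict S) conj22
      hΦm.aemeasurable ((hΦm.pow_const ((1:ℝ)/2)).aemeasurable)
    calc ∫⁻ x in S, Φ x ^ ((3:ℝ)/2)
        = ∫⁻ x in S, (Φ * fun x => Φ x ^ ((1:ℝ)/2)) x := by
          apply lintegral_congr
          intro x
          simp only [Pi.mul_apply]
          rw [show (3:ℝ)/2 = 1 + 1/2 from by norm_num,
            ENNReal.rpow_add_of_nonneg _ _ zero_le_one (by norm_num), ENNReal.rpow_one]
      _ ≤ (∫⁻ x in S, Φ x ^ (2:ℝ)) ^ (1/(2:ℝ))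
            * (∫⁻ x in S, (Φ x ^ ((1:ℝ)/2)) ^ (2:ℝ)) ^ (1/(2:ℝ)) := h
      _ = (∫⁻ x in S, Φ x ^ (2:ℝ)) ^ ((1:ℝ)/2) * (∫⁻ x in S, Φ x) ^ ((1:ℝ)/2) := by
          congr 2
          apply lintegral_congr
          intro x
          rw [← ENNReal.rpow_mul]
          norm_num
  -- bound on ∫_S Φ^2
  have stepS2 : ∫⁻ x in S, Φ x ^ (2:ℝ)
      ≤ ENNReal.ofReal 256 * ((K:ℝ≥0∞) * ENNReal.ofReal G ^ (2:ℝ)) := by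
    have hpt : ∀ x ∈ S, Φ x ^ (2:ℝ) ≤ ENNReal.ofReal 256 * (‖g x‖₊ : ℝ≥0∞) ^ (4:ℝ) := by
      intro x hx
      have hfx : N < f x := hx
      have hfx1 : 1 ≤ f x := le_trans hN hfx.le
      have hs1 := hsq1 x
      have hs2 := hsq2 x
      have hs43 : (4:ℝ)/3 ≤ Real.sqrt (1 + f x) := by
        nlinarith [Real.sqrt_nonneg (1 + f x)]
      have hg4 : f x ^ 2 ≤ 256 * (g x) ^ 4 := by
        have hgx : Real.sqrt (1 + f x) / 4 ≤ g x := by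
          show _ ≤ Real.sqrt (1 + f x) - 1
          nlinarith
        have hgx0 := hg0 x
        have hq : Real.sqrt (1 + f x) / 4 * (Real.sqrt (1 + f x) / 4) ≤ g x * g x :=
          mul_self_le_mul_self (by positivity) hgx
        have key : ∀ a b c : ℝ, 0 ≤ c → 0 ≤ b → a/4*(a/4) ≤ b*b → a^2 = 1 + c →
            c^2 ≤ 256 * b^4 := by
          intro a b c hc hb h1 h2
          have h16 : c ≤ 16 * b^2 := by nlinarith
          nlinarith [mul_le_mul h16 h16 hc (by positivity : (0:ℝ) ≤ 16 * b^2)]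
        exact key _ _ _ (hf0 x) hgx0 hq hs2
      show (ENNReal.ofReal (f x)) ^ (2:ℝ) ≤ _
      rw [ENNReal.ofReal_rpow_of_nonneg (hf0 x) (by norm_num)]
      have h4 : (‖g x‖₊ : ℝ≥0∞) ^ (4:ℝ) = ENNReal.ofReal ((g x) ^ 4) := by
        rw [← ofReal_norm_eq_coe_nnnorm,
          ENNReal.ofReal_rpow_of_nonneg (norm_nonneg _) (by norm_num)]
        congr 1
        rw [Real.norm_eq_abs, abs_of_nonneg (hg0 x),
          show (4:ℝ) = ((4:ℕ):ℝ) from by norm_num, Real.rpow_natCast]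
      rw [h4, ← ENNReal.ofReal_mul (by norm_num)]
      apply ENNReal.ofReal_le_ofReal
      rw [show f x ^ (2:ℝ) = f x ^ (2:ℕ) from by
        rw [show (2:ℝ) = ((2:ℕ):ℝ) from by norm_num, Real.rpow_natCast]]
      exact hg4
    calc ∫⁻ x in S, Φ x ^ (2:ℝ)
        ≤ ∫⁻ x in S, ENNReal.ofReal 256 * (‖g x‖₊ : ℝ≥0∞) ^ (4:ℝ) := setLIntegral_mono' hS hpt
      _ ≤ ∫⁻ x, ENNReal.ofReal 256 * (‖g x‖₊ : ℝ≥0∞) ^ (4:ℝ) :=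
          lintegral_mono' Measure.restrict_le_self le_rfl
      _ = ENNReal.ofReal 256 * ∫⁻ x, (‖g x‖₊ : ℝ≥0∞) ^ (4:ℝ) :=
          lintegral_const_mul _ (hgd.continuous.measurable.ennnorm.pow_const _)
      _ ≤ ENNReal.ofReal 256 * ((K:ℝ≥0∞) * ENNReal.ofReal G ^ (2:ℝ)) :=
          mul_le_mul_right hsob _
  -- entropy bound on ∫_S Φ
  have stepEnt : ∫⁻ x in S, Φ x ≤ ENNReal.ofReal Ent / ENNReal.ofReal L1 := by
    rw [ENNReal.le_div_iff_mul_le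
      (Or.inl (by simp only [ne_eq, ENNReal.ofReal_eq_zero, not_le]; exact hlogN))
      (Or.inl ENNReal.ofReal_ne_top)]
    calc (∫⁻ x in S, Φ x) * ENNReal.ofReal L1
        = ∫⁻ x in S, Φ x * ENNReal.ofReal L1 := (lintegral_mul_const _ hΦm).symm
      _ ≤ ∫⁻ x in S, ENNReal.ofReal ((1 + f x) * Real.log (1 + f x)) := by
          apply setLIntegral_mono' hS
          intro x hx
          have hfx : N < f x := hx
          show ENNReal.ofReal (f x) * ENNReal.ofReal L1 ≤ _
          rw [← ENNReal.ofReal_mul (hf0 x)]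
          apply ENNReal.ofReal_le_ofReal
          have hlog2 : L1 ≤ Real.log (1 + f x) := Real.log_le_log (by linarith) (by linarith)
          exact mul_le_mul (by linarith) hlog2 hlogN.le (h1pf x).le
      _ ≤ ∫⁻ x, ENNReal.ofReal ((1 + f x) * Real.log (1 + f x)) :=
          lintegral_mono' Measure.restrict_le_self le_rfl
      _ = ENNReal.ofReal Ent := hEntlint
  -- combine
  have main : ∫⁻ x, Φ x ^ ((3:ℝ)/2)
      ≤ (ENNReal.ofReal 256 * ((K:ℝ≥0∞) * ENNReal.ofReal G ^ (2:ℝ))) ^ ((1:ℝ)/2)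
          * (ENNReal.ofReal Ent / ENNReal.ofReal L1) ^ ((1:ℝ)/2)
        + ENNReal.ofReal (Real.sqrt N) * ENNReal.ofReal (∫ x, f x) := by
    rw [← lintegral_add_compl (fun x => Φ x ^ ((3:ℝ)/2)) hS]
    refine add_le_add (le_trans stepCS ?_) stepEasy
    exact mul_le_mul' (ENNReal.rpow_le_rpow stepS2 (by norm_num))
      (ENNReal.rpow_le_rpow stepEnt (by norm_num))
  -- identify the constant factor
  have hDG : (ENNReal.ofReal 256 * ((K:ℝ≥0∞) * ENNReal.ofReal G ^ (2:ℝ))) ^ ((1:ℝ)/2)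
      = ENNReal.ofReal (D * G) := by
    have hKco : (K:ℝ≥0∞) = ENNReal.ofReal (K:ℝ) := ENNReal.ofReal_coe_nnreal.symm
    rw [hKco, ENNReal.ofReal_rpow_of_nonneg hG0 (by norm_num),
      ← ENNReal.ofReal_mul (by positivity : (0:ℝ) ≤ (K:ℝ)),
      ← ENNReal.ofReal_mul (by norm_num : (0:ℝ) ≤ (256:ℝ)),
      ENNReal.ofReal_rpow_of_nonneg (by positivity) (by norm_num)]
    congr 1
    rw [show G ^ (2:ℝ) = G ^ (2:ℕ) from by
      rw [show (2:ℝ) = ((2:ℕ):ℝ) from by norm_num, Real.rpow_natCast]]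
    rw [← Real.sqrt_eq_rpow,
      show (256:ℝ) * ((K:ℝ) * G ^ 2) = (256 * (K:ℝ)) * G ^ 2 from by ring,
      Real.sqrt_mul (by positivity) (G ^ 2), Real.sqrt_sq hG0, hD]
  have hEntfac : (ENNReal.ofReal Ent / ENNReal.ofReal L1) ^ ((1:ℝ)/2)
      = ENNReal.ofReal (Ent ^ ((1:ℝ)/2)) / ENNReal.ofReal (Real.sqrt L1) := by
    rw [ENNReal.div_rpow_of_nonneg _ _ (by norm_num),
      ENNReal.ofReal_rpow_of_nonneg hEnt0 (by norm_num),
      ENNReal.ofReal_rpow_of_nonneg hlogN.le (by norm_num), Real.sqrt_eq_rpow]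
  -- comparison of logs
  have hL2le : L2 ≤ 2 * L1 := by
    have h1 : (1 + N ^ 2) ≤ (1 + N) ^ 2 := by nlinarith
    have h2 : Real.log (1 + N ^ 2) ≤ Real.log ((1 + N) ^ 2) :=
      Real.log_le_log (by nlinarith) h1
    rw [Real.log_pow] at h2
    rw [hL2, hL1]
    exact le_trans h2 (by norm_num)
  have hkey : D * Real.sqrt L2 ≤ C * Real.sqrt L1 := by
    have h1 : Real.sqrt L2 ≤ Real.sqrt 2 * Real.sqrt L1 := by
      rw [← Real.sqrt_mul (by norm_num : (0:ℝ) ≤ 2)]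
      exact Real.sqrt_le_sqrt hL2le
    have h2 : Real.sqrt 2 * D ≤ C := by
      rw [hC]
      have := Real.sqrt_nonneg (2:ℝ)
      linarith
    calc D * Real.sqrt L2 ≤ D * (Real.sqrt 2 * Real.sqrt L1) := mul_le_mul_of_nonneg_left h1 hD0
      _ = (Real.sqrt 2 * D) * Real.sqrt L1 := by ring
      _ ≤ C * Real.sqrt L1 := mul_le_mul_of_nonneg_right h2 (Real.sqrt_nonneg _)
  have hEnthalf : 0 ≤ Ent ^ ((1:ℝ)/2) := Real.rpow_nonneg hEnt0 _
  have hRHS1nonneg : 0 ≤ C / Real.sqrt L2 * Ent ^ ((1:ℝ)/2) * G :=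
    mul_nonneg (mul_nonneg (div_nonneg hC0.le (Real.sqrt_nonneg _)) hEnthalf) hG0
  have hfint0 : 0 ≤ ∫ x, f x := integral_nonneg hf0
  have hRHS2nonneg : 0 ≤ C * N ^ ((1:ℝ)/2) * ∫ x, f x :=
    mul_nonneg (mul_nonneg hC0.le (Real.rpow_nonneg (by linarith) _)) hfint0
  have hterm1 : ENNReal.ofReal (D * G)
        * (ENNReal.ofReal (Ent ^ ((1:ℝ)/2)) / ENNReal.ofReal (Real.sqrt L1))
      ≤ ENNReal.ofReal (C / Real.sqrt L2 * Ent ^ ((1:ℝ)/2) * G) := by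
    have hassoc : ENNReal.ofReal (D * G)
          * (ENNReal.ofReal (Ent ^ ((1:ℝ)/2)) / ENNReal.ofReal (Real.sqrt L1))
        = (ENNReal.ofReal (D * G) * ENNReal.ofReal (Ent ^ ((1:ℝ)/2)))
            / ENNReal.ofReal (Real.sqrt L1) := (mul_div_assoc _ _ _).symm
    rw [hassoc, ← ENNReal.ofReal_mul (mul_nonneg hD0 hG0)]
    rw [ENNReal.div_le_iff_le_mul
      (Or.inl (by simp only [ne_eq, ENNReal.ofReal_eq_zero, not_le]; exact Real.sqrt_pos.2 hlogN))
      (Or.inl ENNReal.ofReal_ne_top)]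
    rw [← ENNReal.ofReal_mul hRHS1nonneg]
    apply ENNReal.ofReal_le_ofReal
    have hfrac : D ≤ C * Real.sqrt L1 / Real.sqrt L2 :=
      (le_div_iff₀ (Real.sqrt_pos.2 hL2pos)).2 hkey
    calc D * G * Ent ^ ((1:ℝ)/2) = D * (G * Ent ^ ((1:ℝ)/2)) := by ring
      _ ≤ (C * Real.sqrt L1 / Real.sqrt L2) * (G * Ent ^ ((1:ℝ)/2)) :=
          mul_le_mul_of_nonneg_right hfrac (mul_nonneg hG0 hEnthalf)
      _ = (C / Real.sqrt L2 * Ent ^ ((1:ℝ)/2) * G) * Real.sqrt L1 := by ring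
  have hterm2 : ENNReal.ofReal (Real.sqrt N) * ENNReal.ofReal (∫ x, f x)
      ≤ ENNReal.ofReal (C * N ^ ((1:ℝ)/2) * ∫ x, f x) := by
    rw [← ENNReal.ofReal_mul (Real.sqrt_nonneg N)]
    apply ENNReal.ofReal_le_ofReal
    rw [show N ^ ((1:ℝ)/2) = Real.sqrt N from (Real.sqrt_eq_rpow N).symm]
    nlinarith [Real.sqrt_nonneg N, hfint0, hC1, mul_nonneg (Real.sqrt_nonneg N) hfint0]
  have final : ENNReal.ofReal (∫ x, f x ^ ((3:ℝ)/2))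
      ≤ ENNReal.ofReal (C / Real.sqrt L2 * Ent ^ ((1:ℝ)/2) * G
          + C * N ^ ((1:ℝ)/2) * ∫ x, f x) := by
    rw [hLHS, ENNReal.ofReal_add hRHS1nonneg hRHS2nonneg]
    calc ∫⁻ x, Φ x ^ ((3:ℝ)/2)
        ≤ (ENNReal.ofReal 256 * ((K:ℝ≥0∞) * ENNReal.ofReal G ^ (2:ℝ))) ^ ((1:ℝ)/2)
            * (ENNReal.ofReal Ent / ENNReal.ofReal L1) ^ ((1:ℝ)/2)
          + ENNReal.ofReal (Real.sqrt N) * ENNReal.ofReal (∫ x, f x) := main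
      _ ≤ _ := by
          rw [hDG, hEntfac]
          exact add_le_add hterm1 hterm2
  have := (ENNReal.ofReal_le_ofReal_iff (by linarith)).1 final
  linarith
end

section
/- Assume the sharp Hardy–Littlewood–Sobolev inequality on ℝ⁴: ∬ f(x)|x−y|^{-2}f(y) dx dy ≤ C_HLS ‖f‖_{4/3}² with C_HLS = √(3/2)·π, and the sharp Sobolev inequality ‖f‖_{4/3} ≤ C_S ‖∇f‖_1 with C_S = 2^{1/4}/(4√π). Then for every nonnegative f ∈ W^{1,1}(ℝ⁴) with ∫ |∇f|²/f dx finite, (1/(4π²)) ∬_{ℝ⁴×ℝ⁴} f(x)|x−y|^{-2}f(y) dx dy ≤ (√3/(8π)²) · ‖f‖_1 · ∫_{ℝ⁴} |∇f|²/f dx. In particular C_HLS·C_S²/(4π²) = √3/(8π)². -/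
open MeasureTheory Real Filter Topology

private lemma aux_grad_zero {f : EuclideanSpace ℝ (Fin 4) → ℝ} (hf0 : ∀ x, 0 ≤ f x)
    {x : EuclideanSpace ℝ (Fin 4)} (hx : f x = 0) : fderiv ℝ f x = 0 := by
  refine IsLocalMin.fderiv_eq_zero ?_
  refine Filter.Eventually.of_forall fun y => ?_
  rw [hx]; exact hf0 y

/-- Cauchy–Schwarz step: `(∫‖∇f‖)² ≤ (∫f)·(∫‖∇f‖²/f)`. -/
private lemma aux_cs (f : EuclideanSpace ℝ (Fin 4) → ℝ) (hf0 : ∀ x, 0 ≤ f x)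
    (hfL1 : Integrable f) (hfd : Differentiable ℝ f)
    (hgradL1 : Integrable (fun x => fderiv ℝ f x))
    (hdiss : Integrable (fun x => ‖fderiv ℝ f x‖ ^ 2 / f x)) :
    (∫ x, ‖fderiv ℝ f x‖) ^ 2 ≤ (∫ x, f x) * ∫ x, ‖fderiv ℝ f x‖ ^ 2 / f x := by
  have hfc : Continuous f := hfd.continuous
  set a : EuclideanSpace ℝ (Fin 4) → ℝ := fun x => Real.sqrt (f x) with ha
  set b : EuclideanSpace ℝ (Fin 4) → ℝ :=
    fun x => Real.sqrt (‖fderiv ℝ f x‖ ^ 2 / f x) with hb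
  have hconj : Real.HolderConjugate 2 2 := Real.HolderConjugate.two_two
  have ham : AEStronglyMeasurable a volume := (Real.continuous_sqrt.comp hfc).aestronglyMeasurable
  have hbm : AEStronglyMeasurable b volume := by
    have : AEMeasurable (fun x => ‖fderiv ℝ f x‖ ^ 2 / f x) volume :=
      (hgradL1.aestronglyMeasurable.norm.aemeasurable.pow_const 2).div
        hfc.measurable.aemeasurable
    exact (Real.continuous_sqrt.measurable.comp_aemeasurable this).aestronglyMeasurable
  have hma : MemLp a (ENNReal.ofReal 2) volume := by
    rw [show ENNReal.ofReal (2:ℝ) = 2 by norm_num]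
    refine (memLp_two_iff_integrable_sq ham).2 ?_
    have : (fun x => a x ^ 2) = f := by
      funext x; exact Real.sq_sqrt (hf0 x)
    rw [this]; exact hfL1
  have hmb : MemLp b (ENNReal.ofReal 2) volume := by
    rw [show ENNReal.ofReal (2:ℝ) = 2 by norm_num]
    refine (memLp_two_iff_integrable_sq hbm).2 ?_
    have : (fun x => b x ^ 2) = fun x => ‖fderiv ℝ f x‖ ^ 2 / f x := by
      funext x; exact Real.sq_sqrt (div_nonneg (sq_nonneg _) (hf0 x))
    rw [this]; exact hdiss
  have hab : ∀ x, a x * b x = ‖fderiv ℝ f x‖ := by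
    intro x
    rcases (hf0 x).eq_or_lt with h | h
    · have hF := aux_grad_zero hf0 h.symm
      simp [ha, hb, hF, ← h]
    · show Real.sqrt (f x) * Real.sqrt (‖fderiv ℝ f x‖ ^ 2 / f x) = _
      rw [← Real.sqrt_mul (hf0 x), mul_comm (f x), div_mul_cancel₀ _ h.ne',
        Real.sqrt_sq (norm_nonneg _)]
  have hHold := integral_mul_le_Lp_mul_Lq_of_nonneg hconj
    (ae_of_all _ fun x => Real.sqrt_nonneg _) (ae_of_all _ fun x => Real.sqrt_nonneg _) hma hmb
  have hea : ∫ x, a x ^ (2:ℝ) = ∫ x, f x := by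
    congr 1; funext x; rw [Real.rpow_two]; exact Real.sq_sqrt (hf0 x)
  have heb : ∫ x, b x ^ (2:ℝ) = ∫ x, ‖fderiv ℝ f x‖ ^ 2 / f x := by
    congr 1; funext x; rw [Real.rpow_two]
    exact Real.sq_sqrt (div_nonneg (sq_nonneg _) (hf0 x))
  have heab : ∫ x, ‖fderiv ℝ f x‖ = ∫ x, a x * b x := by
    congr 1; funext x; rw [hab]
  rw [hea, heb] at hHold
  set M : ℝ := ∫ x, f x with hM
  set D : ℝ := ∫ x, ‖fderiv ℝ f x‖ ^ 2 / f x with hD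
  have hM0 : 0 ≤ M := integral_nonneg hf0
  have hD0 : 0 ≤ D := integral_nonneg fun x => div_nonneg (sq_nonneg _) (hf0 x)
  have hG0 : 0 ≤ ∫ x, a x * b x := integral_nonneg fun x =>
    mul_nonneg (Real.sqrt_nonneg _) (Real.sqrt_nonneg _)
  have e1 : (M ^ ((1:ℝ)/2)) ^ 2 = M := by
    rw [← Real.rpow_natCast (M ^ ((1:ℝ)/2)) 2, ← Real.rpow_mul hM0]; norm_num
  have e2 : (D ^ ((1:ℝ)/2)) ^ 2 = D := by
    rw [← Real.rpow_natCast (D ^ ((1:ℝ)/2)) 2, ← Real.rpow_mul hD0]; norm_num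
  rw [heab]
  nlinarith [hHold, hG0, Real.rpow_nonneg hM0 ((1:ℝ)/2), Real.rpow_nonneg hD0 ((1:ℝ)/2),
    mul_le_mul hHold hHold hG0 (mul_nonneg (Real.rpow_nonneg hM0 ((1:ℝ)/2))
      (Real.rpow_nonneg hD0 ((1:ℝ)/2)))]

/-- Truncation step: `f ∈ L^{4/3}` using the Sobolev hypothesis. -/
private lemma aux_integrable_rpow
    (hSob : ∀ g : EuclideanSpace ℝ (Fin 4) → ℝ,
      Integrable g → Differentiable ℝ g → Integrable (fun x => fderiv ℝ g x) →
      (∫ x, |g x| ^ ((4 : ℝ) / 3)) ^ ((3 : ℝ) / 4) ≤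
        ((2 : ℝ) ^ ((1 : ℝ) / 4) / (4 * Real.sqrt π)) * ∫ x, ‖fderiv ℝ g x‖)
    (f : EuclideanSpace ℝ (Fin 4) → ℝ) (hf0 : ∀ x, 0 ≤ f x) (hfL1 : Integrable f)
    (hfd : Differentiable ℝ f) (hgradL1 : Integrable (fun x => fderiv ℝ f x)) :
    Integrable (fun x => (f x) ^ ((4:ℝ)/3)) := by
  have hfc : Continuous f := hfd.continuous
  set CS : ℝ := (2:ℝ) ^ ((1:ℝ)/4) / (4 * Real.sqrt π) with hCS
  have hCS0 : 0 ≤ CS := div_nonneg (Real.rpow_nonneg (by norm_num) _)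
    (by positivity)
  set A : ℝ := ∫ x, ‖fderiv ℝ f x‖ with hA
  have hA0 : 0 ≤ A := integral_nonneg fun x => norm_nonneg _
  set g : ℕ → EuclideanSpace ℝ (Fin 4) → ℝ :=
    fun n x => ((n:ℝ)+1) * f x / (((n:ℝ)+1) + f x) with hg
  have hden : ∀ (n : ℕ) x, (0:ℝ) < ((n:ℝ)+1) + f x := by
    intro n x
    have h1 := hf0 x
    have h2 : (0:ℝ) < (n:ℝ)+1 := by positivity
    linarith
  have hgc : ∀ n, Continuous (g n) := fun n =>
    (continuous_const.mul hfc).div (continuous_const.add hfc) fun x => (hden n x).ne'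
  have hg0 : ∀ n x, 0 ≤ g n x := fun n x =>
    div_nonneg (mul_nonneg (by positivity) (hf0 x)) (hden n x).le
  have hgle : ∀ n x, g n x ≤ f x := by
    intro n x
    rw [div_le_iff₀ (hden n x)]
    nlinarith [hf0 x, sq_nonneg (f x)]
  have hglem : ∀ n x, g n x ≤ (n:ℝ)+1 := by
    intro n x
    rw [div_le_iff₀ (hden n x)]
    nlinarith [hf0 x, sq_nonneg ((n:ℝ)+1)]
  have hgderiv : ∀ (n : ℕ) x, HasFDerivAt (g n)
      (((((n:ℝ)+1)^2 / (((n:ℝ)+1) + f x)^2)) • fderiv ℝ f x) x := by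
    intro n x
    have hne : ((n:ℝ)+1) + f x ≠ 0 := (hden n x).ne'
    have hc : HasDerivAt (fun t : ℝ => ((n:ℝ)+1) * t) ((n:ℝ)+1) (f x) := by
      simpa using (hasDerivAt_id (f x)).const_mul ((n:ℝ)+1)
    have hd : HasDerivAt (fun t : ℝ => ((n:ℝ)+1) + t) 1 (f x) := by
      simpa using (hasDerivAt_id (f x)).const_add ((n:ℝ)+1)
    have hphi := hc.div hd hne
    have h := hphi.comp_hasFDerivAt x (hfd x).hasFDerivAt
    refine h.congr_fderiv ?_
    congr 1
    field_simp
    ring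
  have hgd : ∀ n, Differentiable ℝ (g n) := fun n x => (hgderiv n x).differentiableAt
  have hgfd : ∀ (n : ℕ) x, fderiv ℝ (g n) x =
      (((n:ℝ)+1)^2 / (((n:ℝ)+1) + f x)^2) • fderiv ℝ f x := fun n x => (hgderiv n x).fderiv
  have hc0 : ∀ (n : ℕ) x, 0 ≤ ((n:ℝ)+1)^2 / (((n:ℝ)+1) + f x)^2 := fun n x => by positivity
  have hc1 : ∀ (n : ℕ) x, ((n:ℝ)+1)^2 / (((n:ℝ)+1) + f x)^2 ≤ 1 := by
    intro n x
    rw [div_le_one (pow_pos (hden n x) 2)]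
    nlinarith [hf0 x, (Nat.cast_nonneg n : (0:ℝ) ≤ (n:ℝ))]
  have hnorm_le : ∀ (n : ℕ) x, ‖fderiv ℝ (g n) x‖ ≤ ‖fderiv ℝ f x‖ := by
    intro n x
    rw [hgfd n x, norm_smul]
    refine mul_le_of_le_one_left (norm_nonneg _) ?_
    rw [Real.norm_of_nonneg (hc0 n x)]
    exact hc1 n x
  have hgint : ∀ n, Integrable (g n) := by
    intro n
    refine hfL1.mono' (hgc n).aestronglyMeasurable (ae_of_all _ fun x => ?_)
    rw [Real.norm_of_nonneg (hg0 n x)]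
    exact hgle n x
  have hgfdint : ∀ n, Integrable (fun x => fderiv ℝ (g n) x) := by
    intro n
    have he : (fun x => fderiv ℝ (g n) x) =
        fun x => (((n:ℝ)+1)^2 / (((n:ℝ)+1) + f x)^2) • fderiv ℝ f x := funext (hgfd n)
    rw [he]
    refine hgradL1.norm.mono' ?_ (ae_of_all _ fun x => ?_)
    · exact ((continuous_const.div ((continuous_const.add hfc).pow 2)
        fun x => pow_ne_zero _ (hden n x).ne').aestronglyMeasurable).smul
        hgradL1.aestronglyMeasurable
    · rw [norm_smul]
      refine mul_le_of_le_one_left (norm_nonneg _) ?_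
      rw [Real.norm_of_nonneg (hc0 n x)]
      exact hc1 n x
  have hsob_n : ∀ n, (∫ x, (g n x) ^ ((4:ℝ)/3)) ^ ((3:ℝ)/4) ≤ CS * A := by
    intro n
    have h := hSob (g n) (hgint n) (hgd n) (hgfdint n)
    have habs : ∫ x, |g n x| ^ ((4:ℝ)/3) = ∫ x, (g n x) ^ ((4:ℝ)/3) := by
      congr 1; funext x; rw [abs_of_nonneg (hg0 n x)]
    rw [habs] at h
    refine h.trans ?_
    refine mul_le_mul_of_nonneg_left ?_ hCS0
    exact integral_mono (hgfdint n).norm hgradL1.norm fun x => hnorm_le n x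
  have hint43 : ∀ n, Integrable (fun x => (g n x) ^ ((4:ℝ)/3)) := by
    intro n
    refine (hfL1.const_mul (((n:ℝ)+1) ^ ((1:ℝ)/3))).mono'
      (((hgc n).rpow_const fun x => Or.inr (by norm_num)).aestronglyMeasurable)
      (ae_of_all _ fun x => ?_)
    rw [Real.norm_of_nonneg (Real.rpow_nonneg (hg0 n x) _)]
    calc (g n x) ^ ((4:ℝ)/3) = (g n x) ^ ((1:ℝ)/3) * (g n x) ^ (1:ℝ) := by
          rw [← Real.rpow_add_of_nonneg (hg0 n x) (by norm_num) (by norm_num)]; norm_num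
      _ ≤ ((n:ℝ)+1) ^ ((1:ℝ)/3) * f x := by
          rw [Real.rpow_one]
          exact mul_le_mul (Real.rpow_le_rpow (hg0 n x) (hglem n x) (by norm_num))
            (hgle n x) (hg0 n x) (Real.rpow_nonneg (by positivity) _)
  have hbd : ∀ n, ∫ x, (g n x) ^ ((4:ℝ)/3) ≤ (CS * A) ^ ((4:ℝ)/3) := by
    intro n
    have h1 : (0:ℝ) ≤ ∫ x, (g n x) ^ ((4:ℝ)/3) :=
      integral_nonneg fun x => Real.rpow_nonneg (hg0 n x) _
    have h2 := Real.rpow_le_rpow (Real.rpow_nonneg h1 _) (hsob_n n)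
      (by norm_num : (0:ℝ) ≤ 4/3)
    rw [← Real.rpow_mul h1] at h2
    norm_num at h2
    exact h2
  have hlint_n : ∀ n, ∫⁻ x, ENNReal.ofReal ((g n x) ^ ((4:ℝ)/3)) ≤
      ENNReal.ofReal ((CS * A) ^ ((4:ℝ)/3)) := by
    intro n
    rw [← ofReal_integral_eq_lintegral_ofReal (hint43 n)
      (ae_of_all _ fun x => Real.rpow_nonneg (hg0 n x) _)]
    exact ENNReal.ofReal_le_ofReal (hbd n)
  have hmono : ∀ x, Monotone fun n : ℕ => g n x := by
    intro x n k hnk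
    have hnk' : ((n:ℝ)+1) ≤ ((k:ℝ)+1) := by
      have : (n:ℝ) ≤ (k:ℝ) := Nat.cast_le.2 hnk
      linarith
    show ((n:ℝ)+1) * f x / (((n:ℝ)+1) + f x) ≤ ((k:ℝ)+1) * f x / (((k:ℝ)+1) + f x)
    rw [div_le_div_iff₀ (hden n x) (hden k x)]
    nlinarith [hf0 x, sq_nonneg (f x)]
  have htends : ∀ x, Tendsto (fun n : ℕ => g n x) atTop (𝓝 (f x)) := by
    intro x
    have he : ∀ n : ℕ, g n x = f x - f x * f x / (((n:ℝ)+1) + f x) := by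
      intro n
      have hne : ((n:ℝ)+1) + f x ≠ 0 := (hden n x).ne'
      rw [eq_sub_iff_add_eq, ← add_div, div_eq_iff hne]
      ring
    have hd : Tendsto (fun n : ℕ => ((n:ℝ)+1) + f x) atTop atTop := by
      have := tendsto_natCast_atTop_atTop (R := ℝ)
      have h2 := tendsto_atTop_add_const_right atTop (1 + f x) this
      refine h2.congr fun n => by ring
    have h0 : Tendsto (fun n : ℕ => f x * f x / (((n:ℝ)+1) + f x)) atTop (𝓝 0) :=
      Tendsto.div_atTop tendsto_const_nhds hd
    have hsub : Tendsto (fun n : ℕ => f x - f x * f x / (((n:ℝ)+1) + f x)) atTop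
        (𝓝 (f x - 0)) := Tendsto.sub tendsto_const_nhds h0
    rw [sub_zero] at hsub
    exact Tendsto.congr (fun n => (he n).symm) hsub
  have hmct := lintegral_tendsto_of_tendsto_of_monotone
    (f := fun n x => ENNReal.ofReal ((g n x) ^ ((4:ℝ)/3)))
    (F := fun x => ENNReal.ofReal ((f x) ^ ((4:ℝ)/3)))
    (μ := volume)
    (fun n => (ENNReal.continuous_ofReal.comp
      ((hgc n).rpow_const fun x => Or.inr (by norm_num))).measurable.aemeasurable)
    (ae_of_all _ fun x n k hnk => ENNReal.ofReal_le_ofReal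
      (Real.rpow_le_rpow (hg0 n x) (hmono x hnk) (by norm_num)))
    (ae_of_all _ fun x => by
      refine (ENNReal.continuous_ofReal.tendsto _).comp ?_
      exact ((Real.continuousAt_rpow_const (f x) ((4:ℝ)/3)
        (Or.inr (by norm_num))).tendsto).comp (htends x))
  have hfin : ∫⁻ x, ENNReal.ofReal ((f x) ^ ((4:ℝ)/3)) ≤
      ENNReal.ofReal ((CS * A) ^ ((4:ℝ)/3)) :=
    le_of_tendsto hmct (Eventually.of_forall hlint_n)
  refine ⟨(hfc.rpow_const fun x => Or.inr (by norm_num)).aestronglyMeasurable, ?_⟩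
  rw [hasFiniteIntegral_iff_ofReal (ae_of_all _ fun x => Real.rpow_nonneg (hf0 x) _)]
  exact lt_of_le_of_lt hfin ENNReal.ofReal_lt_top

/-- Assuming the sharp Hardy–Littlewood–Sobolev inequality on `ℝ⁴` with constant
`C_HLS = √(3/2) π` and the sharp Sobolev inequality `‖g‖_{4/3} ≤ C_S ‖∇g‖₁` with
`C_S = 2^{1/4}/(4√π)`, every nonnegative `f ∈ W^{1,1}(ℝ⁴)` with `∫ |∇f|²/f` finite
satisfies `(1/(4π²)) ∬ f(x)|x-y|^{-2}f(y) ≤ (√3/(8π)²) ‖f‖₁ ∫ |∇f|²/f`;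
moreover `C_HLS C_S²/(4π²) = √3/(8π)²`. -/
theorem hls_riesz_potential_bound
    (hHLS : ∀ g : EuclideanSpace ℝ (Fin 4) → ℝ, (∀ x, 0 ≤ g x) →
      Integrable g → MemLp g (ENNReal.ofReal (4 / 3)) →
      (∫ x, ∫ y, g x * ‖x - y‖ ^ (-(2 : ℝ)) * g y) ≤
        (Real.sqrt (3 / 2) * π) * ((∫ x, (g x) ^ ((4 : ℝ) / 3)) ^ ((3 : ℝ) / 4)) ^ 2)
    (hSob : ∀ g : EuclideanSpace ℝ (Fin 4) → ℝ,
      Integrable g → Differentiable ℝ g → Integrable (fun x => fderiv ℝ g x) →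
      (∫ x, |g x| ^ ((4 : ℝ) / 3)) ^ ((3 : ℝ) / 4) ≤
        ((2 : ℝ) ^ ((1 : ℝ) / 4) / (4 * Real.sqrt π)) * ∫ x, ‖fderiv ℝ g x‖)
    (f : EuclideanSpace ℝ (Fin 4) → ℝ)
    (hf0 : ∀ x, 0 ≤ f x)
    (hfL1 : Integrable f)
    (hfd : Differentiable ℝ f)
    (hgradL1 : Integrable (fun x => fderiv ℝ f x))
    (hdiss : Integrable (fun x => ‖fderiv ℝ f x‖ ^ 2 / f x)) :
    (1 / (4 * π ^ 2)) * (∫ x, ∫ y, f x * ‖x - y‖ ^ (-(2 : ℝ)) * f y) ≤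
        (Real.sqrt 3 / (8 * π) ^ 2) * (∫ x, f x) * ∫ x, ‖fderiv ℝ f x‖ ^ 2 / f x
      ∧ (Real.sqrt (3 / 2) * π) * ((2 : ℝ) ^ ((1 : ℝ) / 4) / (4 * Real.sqrt π)) ^ 2 /
          (4 * π ^ 2) = Real.sqrt 3 / (8 * π) ^ 2 := by
  have hπ : (0:ℝ) < π := Real.pi_pos
  have h2sq : ((2:ℝ) ^ ((1:ℝ)/4)) ^ 2 = Real.sqrt 2 := by
    rw [← Real.rpow_natCast ((2:ℝ) ^ ((1:ℝ)/4)) 2, ← Real.rpow_mul (by norm_num : (0:ℝ) ≤ 2),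
      Real.sqrt_eq_rpow]
    norm_num
  have h32 : Real.sqrt (3/2) * Real.sqrt 2 = Real.sqrt 3 := by
    rw [← Real.sqrt_mul (by norm_num : (0:ℝ) ≤ 3/2)]
    norm_num
  have hsqpi : Real.sqrt π ^ 2 = π := Real.sq_sqrt hπ.le
  have hconst : (Real.sqrt (3 / 2) * π) * ((2 : ℝ) ^ ((1 : ℝ) / 4) / (4 * Real.sqrt π)) ^ 2 /
      (4 * π ^ 2) = Real.sqrt 3 / (8 * π) ^ 2 := by
    rw [div_pow, h2sq, mul_pow, hsqpi, ← h32]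
    field_simp
    ring
  refine ⟨?_, hconst⟩
  -- the analytic part
  have hmem : MemLp f (ENNReal.ofReal (4 / 3)) := by
    have hint43 : Integrable (fun x => (f x) ^ ((4:ℝ)/3)) :=
      aux_integrable_rpow hSob f hf0 hfL1 hfd hgradL1
    have hp0 : ENNReal.ofReal ((4:ℝ) / 3) ≠ 0 := ne_of_gt (ENNReal.ofReal_pos.2 (by norm_num))
    have hpt : ENNReal.ofReal ((4:ℝ) / 3) ≠ ⊤ := ENNReal.ofReal_ne_top
    have hI : Integrable (fun x => ‖f x‖ ^ (ENNReal.ofReal ((4:ℝ)/3)).toReal) := by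
      have he : (fun x => ‖f x‖ ^ (ENNReal.ofReal ((4:ℝ)/3)).toReal) =
          fun x => (f x) ^ ((4:ℝ)/3) := by
        funext x
        rw [Real.norm_of_nonneg (hf0 x), ENNReal.toReal_ofReal (by norm_num : (0:ℝ) ≤ 4/3)]
      rw [he]; exact hint43
    have h1 : MemLp (fun x => ‖f x‖ ^ (ENNReal.ofReal ((4:ℝ)/3)).toReal)
        (ENNReal.ofReal ((4:ℝ)/3) / ENNReal.ofReal ((4:ℝ)/3)) := by
      rw [ENNReal.div_self hp0 hpt]
      exact memLp_one_iff_integrable.2 hI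
    exact (memLp_norm_rpow_iff hfd.continuous.aestronglyMeasurable hp0 hpt).1 h1
  have hI := hHLS f hf0 hfL1 hmem
  have hN := hSob f hfL1 hfd hgradL1
  have habsf : ∫ x, |f x| ^ ((4:ℝ)/3) = ∫ x, (f x) ^ ((4:ℝ)/3) := by
    congr 1; funext x; rw [abs_of_nonneg (hf0 x)]
  rw [habsf] at hN
  have hcs := aux_cs f hf0 hfL1 hfd hgradL1 hdiss
  set CS : ℝ := (2:ℝ) ^ ((1:ℝ)/4) / (4 * Real.sqrt π) with hCSdef
  set N : ℝ := (∫ x, (f x) ^ ((4:ℝ)/3)) ^ ((3:ℝ)/4) with hNdef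
  set A : ℝ := ∫ x, ‖fderiv ℝ f x‖ with hAdef
  set M : ℝ := ∫ x, f x with hMdef
  set D : ℝ := ∫ x, ‖fderiv ℝ f x‖ ^ 2 / f x with hDdef
  have hN0 : 0 ≤ N := Real.rpow_nonneg
    (integral_nonneg fun x => Real.rpow_nonneg (hf0 x) _) _
  have hCS0 : 0 ≤ CS := div_nonneg (Real.rpow_nonneg (by norm_num) _) (by positivity)
  have hA0 : 0 ≤ A := integral_nonneg fun x => norm_nonneg _
  have hM0 : 0 ≤ M := integral_nonneg hf0
  have hD0 : 0 ≤ D := integral_nonneg fun x => div_nonneg (sq_nonneg _) (hf0 x)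
  have hK0 : (0:ℝ) ≤ Real.sqrt (3/2) * π := by positivity
  have hN2 : N ^ 2 ≤ CS ^ 2 * (M * D) := by
    have h1 : N ^ 2 ≤ (CS * A) ^ 2 := pow_le_pow_left₀ hN0 hN 2
    calc N ^ 2 ≤ (CS * A) ^ 2 := h1
      _ = CS ^ 2 * A ^ 2 := by ring
      _ ≤ CS ^ 2 * (M * D) := mul_le_mul_of_nonneg_left hcs (sq_nonneg CS)
  have hI2 : (∫ x, ∫ y, f x * ‖x - y‖ ^ (-(2 : ℝ)) * f y) ≤
      Real.sqrt (3/2) * π * (CS ^ 2 * (M * D)) :=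
    hI.trans (mul_le_mul_of_nonneg_left hN2 hK0)
  calc (1 / (4 * π ^ 2)) * (∫ x, ∫ y, f x * ‖x - y‖ ^ (-(2 : ℝ)) * f y)
      ≤ (1 / (4 * π ^ 2)) * (Real.sqrt (3/2) * π * (CS ^ 2 * (M * D))) :=
        mul_le_mul_of_nonneg_left hI2 (by positivity)
    _ = (Real.sqrt (3/2) * π) * CS ^ 2 / (4 * π ^ 2) * M * D := by ring
    _ = Real.sqrt 3 / (8 * π) ^ 2 * M * D := by rw [hconst]
end

section
/- Let f ∈ W^{1,2}(ℝ⁴) ∩ L¹(ℝ⁴) be nonnegative and α > 0. Then (f−α)₊ := max{f−α, 0} belongs to W^{1,1}(ℝ⁴) and ‖∇(f−α)₊‖₁ ≤ ((1+α)/α · ‖f‖₁)^{1/2} · (∫_{ℝ⁴} |∇f|²/(1+f) dx)^{1/2}. -/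
open MeasureTheory

/-- For nonnegative `f ∈ W^{1,2}(ℝ⁴) ∩ L¹(ℝ⁴)` and `α > 0`, the truncation
`(f-α)₊` belongs to `W^{1,1}(ℝ⁴)` and
`‖∇(f-α)₊‖₁ ≤ ((1+α)/α ‖f‖₁)^{1/2} (∫ |∇f|²/(1+f))^{1/2}`. -/
theorem truncation_W11_estimate
    (f : EuclideanSpace ℝ (Fin 4) → ℝ)
    (hf0 : ∀ x, 0 ≤ f x)
    (hfL1 : Integrable f)
    (hfL2 : MemLp f 2)
    (hfd : Differentiable ℝ f)
    (hgradL2 : MemLp (fun x => fderiv ℝ f x) 2)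
    (hdiss : Integrable (fun x => ‖fderiv ℝ f x‖ ^ 2 / (1 + f x)))
    (α : ℝ) (hα : 0 < α) :
    Integrable (fun x => max (f x - α) 0) ∧
    Integrable (fun x => fderiv ℝ (fun y => max (f y - α) 0) x) ∧
    (∫ x, ‖fderiv ℝ (fun y => max (f y - α) 0) x‖) ≤
      Real.sqrt ((1 + α) / α * ∫ x, f x) *
        Real.sqrt (∫ x, ‖fderiv ℝ f x‖ ^ 2 / (1 + f x)) := by
  have hfc : Continuous f := hfd.continuous
  set D := fun x => fderiv ℝ (fun y => max (f y - α) 0) x with hDdef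
  set u := fun x => ‖fderiv ℝ f x‖ / Real.sqrt (1 + f x) with hudef
  set v := fun x => Real.sqrt ((1 + α) / α * f x) with hvdef
  have h1f : ∀ x, (0:ℝ) < 1 + f x := fun x => by linarith [hf0 x]
  have hu0 : ∀ x, 0 ≤ u x := fun x => div_nonneg (norm_nonneg _) (Real.sqrt_nonneg _)
  have hv0 : ∀ x, 0 ≤ v x := fun x => Real.sqrt_nonneg _
  -- the key pointwise description of D
  have hDle : ∀ x, ‖D x‖ ≤ u x * v x := by
    intro x
    rcases lt_trichotomy (f x) α with hx | hx | hx
    · -- f x < α : locally the function is 0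
      have hev : (fun y => max (f y - α) 0) =ᶠ[nhds x] (fun _ => (0:ℝ)) := by
        have : ∀ᶠ y in nhds x, f y < α :=
          (hfc.continuousAt).eventually_lt continuousAt_const hx
        filter_upwards [this] with y hy
        simp [max_eq_right (by linarith : f y - α ≤ 0)]
      have : D x = fderiv ℝ (fun _ => (0:ℝ)) x := hev.fderiv_eq
      rw [this, fderiv_const_apply]
      simpa using mul_nonneg (hu0 x) (hv0 x)
    · -- f x = α : global minimum, derivative is 0
      have hmin : IsLocalMin (fun y => max (f y - α) 0) x := by
        apply Filter.Eventually.of_forall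
        intro y
        simp [hx, le_max_iff]
      have : D x = 0 := by
        by_cases hd : DifferentiableAt ℝ (fun y => max (f y - α) 0) x
        · exact hmin.fderiv_eq_zero
        · exact fderiv_zero_of_not_differentiableAt hd
      rw [this]
      simpa using mul_nonneg (hu0 x) (hv0 x)
    · -- α < f x : locally the function is f - α
      have hev : (fun y => max (f y - α) 0) =ᶠ[nhds x] (fun y => f y - α) := by
        have : ∀ᶠ y in nhds x, α < f y :=
          (continuousAt_const).eventually_lt (hfc.continuousAt) hx
        filter_upwards [this] with y hy
        simp [max_eq_left (by linarith : (0:ℝ) ≤ f y - α)]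
      have hD : D x = fderiv ℝ f x := by
        rw [hDdef]
        simp only
        rw [hev.fderiv_eq, fderiv_sub_const]
      rw [hD]
      have hsq : Real.sqrt (1 + f x) ≤ v x := by
        apply Real.sqrt_le_sqrt
        rw [div_mul_eq_mul_div, le_div_iff₀ hα]
        nlinarith
      have hne : Real.sqrt (1 + f x) ≠ 0 :=
        ne_of_gt (Real.sqrt_pos.mpr (h1f x))
      calc ‖fderiv ℝ f x‖ = u x * Real.sqrt (1 + f x) := by
            rw [hudef]; field_simp
        _ ≤ u x * v x := mul_le_mul_of_nonneg_left hsq (hu0 x)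
  -- measurability facts
  have hDm : AEStronglyMeasurable D volume :=
    (measurable_fderiv ℝ _).aestronglyMeasurable
  have hum : AEStronglyMeasurable u volume :=
    ((measurable_fderiv ℝ f).norm.div
      ((measurable_const.add hfc.measurable).sqrt)).aestronglyMeasurable
  have hvm : AEStronglyMeasurable v volume :=
    ((measurable_const.mul hfc.measurable).sqrt).aestronglyMeasurable
  -- u and v are in L²
  have husq : ∀ x, u x ^ 2 = ‖fderiv ℝ f x‖ ^ 2 / (1 + f x) := by
    intro x
    rw [hudef]
    rw [div_pow, Real.sq_sqrt (h1f x).le]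
  have hvsq : ∀ x, v x ^ 2 = (1 + α) / α * f x := by
    intro x
    rw [hvdef]
    exact Real.sq_sqrt (mul_nonneg (div_nonneg (by linarith) hα.le) (hf0 x))
  have huL2 : MemLp u 2 volume := by
    rw [memLp_two_iff_integrable_sq hum]
    simpa only [husq] using hdiss
  have hvL2 : MemLp v 2 volume := by
    rw [memLp_two_iff_integrable_sq hvm]
    have : Integrable (fun x => (1 + α) / α * f x) volume := hfL1.const_mul _
    exact this.congr (Filter.Eventually.of_forall fun x => (hvsq x).symm)
  -- product u * v is integrable
  have huv : Integrable (fun x => u x * v x) volume := by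
    apply Integrable.mono' (((huL2.integrable_sq).add (hvL2.integrable_sq)).div_const 2)
      (hum.mul hvm)
    apply Filter.Eventually.of_forall
    intro x
    show ‖u x * v x‖ ≤ (u x ^ 2 + v x ^ 2) / 2
    rw [Real.norm_of_nonneg (mul_nonneg (hu0 x) (hv0 x))]
    nlinarith [sq_nonneg (u x - v x)]
  -- D is integrable
  have hDint : Integrable D volume := by
    apply Integrable.mono' huv hDm
    exact Filter.Eventually.of_forall hDle
  -- part 1
  refine ⟨?_, hDint, ?_⟩
  · apply Integrable.mono hfL1
      (((hfc.sub continuous_const).max continuous_const).aestronglyMeasurable)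
    apply Filter.Eventually.of_forall
    intro x
    rw [Real.norm_of_nonneg (le_max_right _ _), Real.norm_of_nonneg (hf0 x)]
    exact max_le (by show f x - α ≤ f x; linarith [hf0 x]) (hf0 x)
  -- part 3 : the estimate
  have step1 : (∫ x, ‖D x‖) ≤ ∫ x, u x * v x :=
    integral_mono hDint.norm huv hDle
  have hconj : Real.HolderConjugate 2 2 := Real.HolderConjugate.two_two
  have h2 : ENNReal.ofReal (2:ℝ) = 2 := by norm_num
  have step2 : (∫ x, u x * v x) ≤
      (∫ x, u x ^ (2:ℝ)) ^ ((1:ℝ)/2) * (∫ x, v x ^ (2:ℝ)) ^ ((1:ℝ)/2) := by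
    apply integral_mul_le_Lp_mul_Lq_of_nonneg hconj
      (Filter.Eventually.of_forall hu0) (Filter.Eventually.of_forall hv0)
    · rwa [h2]
    · rwa [h2]
  have hrpow : ∀ g : EuclideanSpace ℝ (Fin 4) → ℝ, (∀ x, 0 ≤ g x) →
      (∫ x, g x ^ (2:ℝ)) = ∫ x, g x ^ 2 := by
    intro g hg
    apply integral_congr_ae
    apply Filter.Eventually.of_forall
    intro x
    show g x ^ (2:ℝ) = g x ^ 2
    rw [show (2:ℝ) = ((2:ℕ):ℝ) by norm_num, Real.rpow_natCast]
  have hintu2 : (∫ x, u x ^ 2) = ∫ x, ‖fderiv ℝ f x‖ ^ 2 / (1 + f x) := by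
    apply integral_congr_ae
    exact Filter.Eventually.of_forall fun x => husq x
  have hintv2 : (∫ x, v x ^ 2) = (1 + α) / α * ∫ x, f x := by
    rw [show (∫ x, v x ^ 2) = ∫ x, (1 + α) / α * f x from
      integral_congr_ae (Filter.Eventually.of_forall fun x => hvsq x)]
    exact integral_const_mul _ _
  have hnn2 : (0:ℝ) ≤ ∫ x, u x ^ 2 :=
    integral_nonneg fun x => sq_nonneg _
  have hnn3 : (0:ℝ) ≤ ∫ x, v x ^ 2 :=
    integral_nonneg fun x => sq_nonneg _
  calc (∫ x, ‖D x‖) ≤ ∫ x, u x * v x := step1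
    _ ≤ (∫ x, u x ^ (2:ℝ)) ^ ((1:ℝ)/2) * (∫ x, v x ^ (2:ℝ)) ^ ((1:ℝ)/2) := step2
    _ = Real.sqrt (∫ x, u x ^ 2) * Real.sqrt (∫ x, v x ^ 2) := by
        rw [hrpow u hu0, hrpow v hv0, ← Real.sqrt_eq_rpow, ← Real.sqrt_eq_rpow]
    _ = Real.sqrt ((1 + α) / α * ∫ x, f x) *
        Real.sqrt (∫ x, ‖fderiv ℝ f x‖ ^ 2 / (1 + f x)) := by
        rw [hintu2, hintv2, mul_comm]
end
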